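/- arXiv:1609.07274 — 4 statements merged into one kernel-verified Lean document; each statement's English description precedes it below -/
import Mathlib

section
/- Let R be a finite non-commutative ring of order n with Z(R) = {0}. Then γ(Γ(R)) + γ(Γ̄(R)) ≠ n - 1. -/
open scoped Classical

noncomputable section

/-- The commuting graph of a (non-unital, possibly non-commutative) ring `R`:
vertices are the non-central elements, and two distinct vertices are adjacent
iff they commute. -/
def commutingGraph (R : Type*) [NonUnitalRing R] :
    SimpleGraph {x : R // x ∉ Set.center R} where
  Adj a b := a ≠ b ∧ (a : R) * b = (b : R) * a
  symm := by constructor; rintro a b ⟨h1, h2⟩; exact ⟨h1.symm, h2.symm⟩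
  loopless := by constructor; rintro a ⟨h, -⟩; exact h rfl

/-- A dominating set: every vertex not in `D` is adjacent to some vertex of `D`. -/
def SimpleGraph.IsDominatingSet {V : Type*} (G : SimpleGraph V) (D : Finset V) : Prop :=
  ∀ v, v ∉ D → ∃ u ∈ D, G.Adj u v

/-- The domination number: the minimum cardinality of a dominating set. -/
noncomputable def SimpleGraph.dominationNumber {V : Type*} [Fintype V] (G : SimpleGraph V) : ℕ :=
  sInf {n | ∃ D : Finset V, G.IsDominatingSet D ∧ D.card = n}

/-- The signed domination number: the minimum total weight of a function
`f : V → {-1, 1}` whose sum over every closed neighbourhood is at least `1`. -/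
noncomputable def SimpleGraph.signedDominationNumber {V : Type*} [Fintype V]
    (G : SimpleGraph V) : ℤ :=
  sInf {w : ℤ | ∃ f : V → ℤ, (∀ v, f v = 1 ∨ f v = -1) ∧
    (∀ v : V, 1 ≤ ∑ u ∈ Finset.univ.filter (fun u => G.Adj v u ∨ u = v), f u) ∧
    w = ∑ v, f v}

/-- Underlying type of the ring `E`. -/
def Ering : Type := ZMod 2 × ZMod 2

instance : Fintype Ering := inferInstanceAs (Fintype (ZMod 2 × ZMod 2))
instance : DecidableEq Ering := inferInstanceAs (DecidableEq (ZMod 2 × ZMod 2))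
instance : AddCommGroup Ering := inferInstanceAs (AddCommGroup (ZMod 2 × ZMod 2))
instance : Mul Ering := ⟨fun a b => (b.1 * a.1, b.1 * a.2)⟩

/-- `E = ⟨x,y : 2x=2y=0, x²=x, y²=y, xy=x, yx=y⟩`, realized on `ZMod 2 × ZMod 2`
with `x = (1,0)`, `y = (1,1)` and multiplication `a * b = (b₁a₁, b₁a₂)`. -/
instance : NonUnitalRing Ering :=
  { (inferInstance : AddCommGroup Ering), (inferInstance : Mul Ering) with
    left_distrib := by decide
    right_distrib := by decide
    zero_mul := by decide
    mul_zero := by decide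
    mul_assoc := by decide }

/-- Underlying type of the ring `F`. -/
def Fring : Type := ZMod 2 × ZMod 2

instance : Fintype Fring := inferInstanceAs (Fintype (ZMod 2 × ZMod 2))
instance : DecidableEq Fring := inferInstanceAs (DecidableEq (ZMod 2 × ZMod 2))
instance : AddCommGroup Fring := inferInstanceAs (AddCommGroup (ZMod 2 × ZMod 2))
instance : Mul Fring := ⟨fun a b => (a.1 * b.1, a.1 * b.2)⟩

/-- `F = ⟨x,y : 2x=2y=0, x²=x, y²=y, xy=y, yx=x⟩`, realized on `ZMod 2 × ZMod 2`
with `x = (1,0)`, `y = (1,1)` and multiplication `a * b = (a₁b₁, a₁b₂)`. -/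
instance : NonUnitalRing Fring :=
  { (inferInstance : AddCommGroup Fring), (inferInstance : Mul Fring) with
    left_distrib := by decide
    right_distrib := by decide
    zero_mul := by decide
    mul_zero := by decide
    mul_assoc := by decide }

set_option linter.unusedSectionVars false

namespace DomAux

variable {R : Type*} [NonUnitalRing R] [Fintype R]


variable {R : Type*} [NonUnitalRing R] [Fintype R]

def Kgrp (x : R) : AddSubgroup R where
  carrier := {r | r * x = x * r}
  zero_mem' := by simp
  add_mem' := by
    intro a b ha hb
    simp only [Set.mem_setOf_eq] at *
    rw [add_mul, mul_add, ha, hb]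
  neg_mem' := by
    intro a ha
    simp only [Set.mem_setOf_eq] at *
    rw [neg_mul, mul_neg, ha]

lemma mem_Kgrp {x r : R} : r ∈ Kgrp x ↔ r * x = x * r := Iff.rfl

def Kf (x : R) : Finset R := Finset.univ.filter (fun r => r * x = x * r)

lemma mem_Kf {x r : R} : r ∈ Kf x ↔ r * x = x * r := by simp [Kf]

lemma zero_mem_Kf (x : R) : (0 : R) ∈ Kf x := by simp [mem_Kf]

lemma self_mem_Kf (x : R) : x ∈ Kf x := by simp [mem_Kf]

lemma card_Kf_eq (x : R) : Nat.card (Kgrp x) = (Kf x).card := by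
  rw [Nat.card_eq_fintype_card]
  rw [show (Kf x) = Finset.univ.filter (fun r => r ∈ Kgrp x) from by
    apply Finset.filter_congr; intro r _; simp [mem_Kgrp, Kf]]
  exact Fintype.card_subtype _

lemma card_inf_eq (x y : R) :
    Nat.card (Kgrp x ⊓ Kgrp y : AddSubgroup R) = (Kf x ∩ Kf y).card := by
  rw [Nat.card_eq_fintype_card]
  rw [show (Kf x ∩ Kf y) = Finset.univ.filter (fun r => r ∈ (Kgrp x ⊓ Kgrp y : AddSubgroup R)) from by
    ext r; simp [mem_Kgrp, Kf, AddSubgroup.mem_inf]]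
  exact Fintype.card_subtype _

lemma card_Kf_pos (x : R) : 0 < (Kf x).card :=
  Finset.card_pos.2 ⟨0, zero_mem_Kf x⟩

lemma two_mul_le {d c : ℕ} (hc : 0 < c) (hd : d ∣ c) (hlt : d < c) : 2 * d ≤ c := by
  obtain ⟨k, rfl⟩ := hd
  rcases k with _ | _ | k
  · omega
  · omega
  · calc 2 * d ≤ d * (k + 2) := by nlinarith
    _ = _ := rfl

/-- order of x divides card of centralizer of y when x ∈ Kf y -/
lemma addOrderOf_dvd_card_Kf {x y : R} (h : x ∈ Kf y) : addOrderOf x ∣ (Kf y).card := by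
  rw [← card_Kf_eq]
  rw [← Nat.card_zmultiples]
  exact AddSubgroup.card_dvd_of_le (AddSubgroup.zmultiples_le.2 (mem_Kgrp.2 (mem_Kf.1 h)))

lemma addOrderOf_two {u : R} (hu : u ≠ 0) (h2 : u + u = 0) : addOrderOf u = 2 := by
  haveI : Fact (Nat.Prime 2) := ⟨Nat.prime_two⟩
  exact addOrderOf_eq_prime (by rw [two_nsmul]; exact h2) hu

/-- No ring with a 2-torsion noncentral element and a centralizer of size 3. -/
lemma no23 {u w : R} (hu : u ≠ 0) (hu2 : u + u = 0) (hw : w ≠ 0)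
    (hcw : (Kf w).card = 3) : False := by
  -- addOrderOf w = 3
  have hdvd : addOrderOf w ∣ 3 := hcw ▸ addOrderOf_dvd_card_Kf (self_mem_Kf w)
  have hne1 : addOrderOf w ≠ 1 := by
    simp only [ne_eq, AddMonoid.addOrderOf_eq_one_iff]; exact hw
  have ho3 : addOrderOf w = 3 := by
    rcases (Nat.prime_three).eq_one_or_self_of_dvd _ hdvd with h | h <;> omega
  have h3w : w + w + w = 0 := by
    have := addOrderOf_nsmul_eq_zero w
    rw [ho3] at this
    rw [show (3 : ℕ) • w = w + w + w from by rw [succ_nsmul, two_nsmul]] at this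
    exact this
  have hww : w + w = -w := by
    have : (w + w) + w = 0 := h3w
    linear_combination (norm := abel) this
  set z := w + u with hzdef
  have hzz : z + z = -w := by
    have : z + z = w + w + (u + u) := by rw [hzdef]; abel
    rw [this, hu2, add_zero, hww]
  have hz1 : z * (z + z) = (z + z) * z := (mul_add z z z).trans (add_mul z z z).symm
  rw [hzz] at hz1
  have hzKw : z ∈ Kf w := by
    rw [mem_Kf]
    have h1 : z * w = w * z := by
      have := hz1
      rw [mul_neg, neg_mul] at this
      exact neg_injective this
    exact h1
  have huKw : u ∈ Kf w := by
    have : u = z - w := by rw [hzdef]; abel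
    rw [this, mem_Kf, sub_mul, mul_sub, mem_Kf.1 hzKw]
  have : addOrderOf u ∣ 3 := hcw ▸ addOrderOf_dvd_card_Kf huKw
  rw [addOrderOf_two hu hu2] at this
  omega

lemma Kf_card_two {x : R} (hx : x ≠ 0) (h2 : (Kf x).card = 2) :
    Kf x = {0, x} := by
  symm
  apply Finset.eq_of_subset_of_card_le
  · intro r hr
    rcases Finset.mem_insert.1 hr with h | h
    · rw [h]; exact zero_mem_Kf x
    · rw [Finset.mem_singleton.1 h]; exact self_mem_Kf x
  · rw [h2, Finset.card_insert_of_notMem (by simp [hx.symm]), Finset.card_singleton]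

lemma two_torsion_of_card_two {x : R} (hx : x ≠ 0) (h2 : (Kf x).card = 2) :
    x + x = 0 := by
  have h := Kf_card_two hx h2
  have hxx : x + x ∈ Kf x := by rw [mem_Kf, add_mul, mul_add]
  rw [h] at hxx
  rcases Finset.mem_insert.1 hxx with h' | h'
  · exact h'
  · exfalso; rw [Finset.mem_singleton] at h'
    exact hx (add_left_cancel (by rw [add_zero]; exact h' : x + x = x + 0))


lemma two_le_card_Kf {x : R} (hx : x ≠ 0) : 2 ≤ (Kf x).card := by
  have hsub : ({0, x} : Finset R) ⊆ Kf x := by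
    intro r hr
    rcases Finset.mem_insert.1 hr with h | h
    · rw [h]; exact zero_mem_Kf x
    · rw [Finset.mem_singleton.1 h]; exact self_mem_Kf x
  calc 2 = ({0, x} : Finset R).card := by
        rw [Finset.card_insert_of_notMem (by simp [hx.symm] : (0:R) ∉ ({x} : Finset R)),
          Finset.card_singleton]
    _ ≤ _ := Finset.card_le_card hsub

lemma inter_card_dvd (x y : R) : (Kf x ∩ Kf y).card ∣ (Kf x).card := by
  rw [← card_inf_eq, ← card_Kf_eq]
  exact AddSubgroup.card_dvd_of_le inf_le_left

lemma ord3 {w : R} (hw : w ≠ 0) (hcw : (Kf w).card = 3) : addOrderOf w = 3 := by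
  have hdvd : addOrderOf w ∣ 3 := hcw ▸ addOrderOf_dvd_card_Kf (self_mem_Kf w)
  have hne1 : addOrderOf w ≠ 1 := by
    simp only [ne_eq, AddMonoid.addOrderOf_eq_one_iff]; exact hw
  rcases (Nat.prime_three).eq_one_or_self_of_dvd _ hdvd with h | h <;> omega


-- domination generics
lemma dom_le {V : Type*} [Fintype V] (G : SimpleGraph V) (D : Finset V)
    (hD : G.IsDominatingSet D) : G.dominationNumber ≤ D.card :=
  Nat.sInf_le ⟨D, hD, rfl⟩

lemma univ_dom {V : Type*} [Fintype V] (G : SimpleGraph V) :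
    G.IsDominatingSet Finset.univ := fun v hv => absurd (Finset.mem_univ v) hv

lemma le_dom {V : Type*} [Fintype V] (G : SimpleGraph V) (k : ℕ)
    (h : ∀ D, G.IsDominatingSet D → k ≤ D.card) : k ≤ G.dominationNumber :=
  le_csInf ⟨_, Finset.univ, univ_dom G, rfl⟩ (by rintro n ⟨D, hD, rfl⟩; exact h D hD)

lemma adj_iff {u v : {x : R // x ∉ Set.center R}} :
    (commutingGraph R).Adj u v ↔ u ≠ v ∧ (u : R) * v = (v : R) * u := Iff.rfl

lemma compl_adj_iff {u v : {x : R // x ∉ Set.center R}} :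
    ((commutingGraph R)ᶜ).Adj u v ↔ u ≠ v ∧ ¬ (u : R) * v = (v : R) * u := by
  rw [SimpleGraph.compl_adj]
  constructor
  · rintro ⟨h1, h2⟩
    exact ⟨h1, fun hc => h2 ⟨h1, hc⟩⟩
  · rintro ⟨h1, h2⟩
    exact ⟨h1, fun hc => h2 hc.2⟩

variable (hz : Set.center R = {0})

lemma not_central (hz : Set.center R = {0}) {x : R} (hx : x ≠ 0) : x ∉ Set.center R := by
  rw [hz]; simpa using hx

/-- vertices whose value lies in a finset T of R -/
def vset (T : Finset R) : Finset {x : R // x ∉ Set.center R} :=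
  Finset.univ.filter (fun v => (v : R) ∈ T)

lemma mem_vset {T : Finset R} {v : {x : R // x ∉ Set.center R}} :
    v ∈ vset T ↔ (v : R) ∈ T := by simp [vset]

lemma card_vset (hz : Set.center R = {0}) (T : Finset R) :
    (vset T).card = (T.erase 0).card := by
  refine Finset.card_bij (fun a _ => (a : R)) ?_ ?_ ?_
  · intro a ha
    refine Finset.mem_erase.2 ⟨?_, mem_vset.1 ha⟩
    intro h0
    have h0' : (a : R) = 0 := h0
    exact a.2 (h0' ▸ (by rw [hz]; exact Set.mem_singleton 0))
  · intro a _ b _ h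
    exact Subtype.ext h
  · intro b hb
    rcases Finset.mem_erase.1 hb with ⟨hb0, hbT⟩
    exact ⟨⟨b, not_central hz hb0⟩, mem_vset.2 hbT, rfl⟩

/-- generic covering bound for the commuting graph domination number -/
lemma gamma1_bound (A S : Finset {x : R // x ∉ Set.center R}) (hSA : S ⊆ A)
    (hcov : ∀ v ∈ A, v ∉ S → ∃ u ∈ S, u ≠ v ∧ (u : R) * v = (v : R) * u) :
    (commutingGraph R).dominationNumber + A.card
      ≤ Fintype.card {x : R // x ∉ Set.center R} + S.card := by
  set D := S ∪ (Finset.univ \ A) with hD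
  have hdom : (commutingGraph R).IsDominatingSet D := by
    intro v hv
    have hvS : v ∉ S := fun h => hv (Finset.mem_union_left _ h)
    have hvA : v ∈ A := by
      by_contra h
      exact hv (Finset.mem_union_right _ (Finset.mem_sdiff.2 ⟨Finset.mem_univ v, h⟩))
    obtain ⟨u, hu, hne, hc⟩ := hcov v hvA hvS
    exact ⟨u, Finset.mem_union_left _ hu, adj_iff.2 ⟨hne, hc⟩⟩
  have h1 : (commutingGraph R).dominationNumber ≤ D.card := dom_le _ _ hdom
  have h2 : D.card ≤ S.card + (Finset.univ \ A).card := Finset.card_union_le _ _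
  have h3 : (Finset.univ \ A).card
      = Fintype.card {x : R // x ∉ Set.center R} - A.card := by
    rw [Finset.card_sdiff_of_subset (Finset.subset_univ A), Finset.card_univ]
  have h4 : A.card ≤ Fintype.card {x : R // x ∉ Set.center R} := by
    rw [← Finset.card_univ]; exact Finset.card_le_card (Finset.subset_univ A)
  omega

lemma multi_bound (hz : Set.center R = {0}) (L : Finset R) (hL : ∀ a ∈ L, a ≠ 0) :
    (commutingGraph R).dominationNumber + (vset (L.biUnion Kf)).card
      ≤ Fintype.card {x : R // x ∉ Set.center R} + L.card := by
  have hb := gamma1_bound (R := R) (vset (L.biUnion Kf)) (vset L) ?_ ?_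
  · have hcard : (vset (L : Finset R)).card ≤ L.card := by
      rw [card_vset hz]; exact Finset.card_le_card (Finset.erase_subset _ _)
    omega
  · intro v hv
    rw [mem_vset] at hv ⊢
    exact Finset.mem_biUnion.2 ⟨(v : R), hv, self_mem_Kf _⟩
  · intro v hvA hvS
    rw [mem_vset] at hvA
    obtain ⟨a, haL, hva⟩ := Finset.mem_biUnion.1 hvA
    refine ⟨⟨a, not_central hz (hL a haL)⟩, mem_vset.2 haL, ?_, (mem_Kf.1 hva).symm⟩
    intro h
    exact hvS (h ▸ mem_vset.2 haL)

lemma gamma2_pair (hz : Set.center R = {0}) {x y : R} (hx : x ≠ 0) (hy : y ≠ 0)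
    (hxy : ¬ x * y = y * x) :
    ((commutingGraph R)ᶜ).dominationNumber ≤ (Kf x ∩ Kf y).card + 1 := by
  set X : {r : R // r ∉ Set.center R} := ⟨x, not_central hz hx⟩
  set Y : {r : R // r ∉ Set.center R} := ⟨y, not_central hz hy⟩
  set D := vset (Kf x ∩ Kf y) ∪ {X, Y} with hD
  have hdom : ((commutingGraph R)ᶜ).IsDominatingSet D := by
    intro v hv
    have hvD : v ∉ vset (Kf x ∩ Kf y) ∧ v ≠ X ∧ v ≠ Y := by
      constructor
      · intro h; exact hv (Finset.mem_union_left _ h)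
      constructor
      · intro h; exact hv (Finset.mem_union_right _ (by rw [h]; simp))
      · intro h; exact hv (Finset.mem_union_right _ (by rw [h]; simp))
    by_cases hcx : (v : R) ∈ Kf x
    · by_cases hcy : (v : R) ∈ Kf y
      · exact absurd (mem_vset.2 (Finset.mem_inter.2 ⟨hcx, hcy⟩)) hvD.1
      · refine ⟨Y, Finset.mem_union_right _ (by simp), compl_adj_iff.2 ⟨Ne.symm hvD.2.2, ?_⟩⟩
        intro h
        exact hcy (mem_Kf.2 h.symm)
    · refine ⟨X, Finset.mem_union_right _ (by simp), compl_adj_iff.2 ⟨Ne.symm hvD.2.1, ?_⟩⟩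
      intro h
      exact hcx (mem_Kf.2 h.symm)
  have h1 := dom_le _ _ hdom
  have h2 : D.card ≤ (vset (Kf x ∩ Kf y)).card + 2 := by
    calc D.card ≤ (vset (Kf x ∩ Kf y)).card + ({X, Y} : Finset _).card :=
          Finset.card_union_le _ _
      _ ≤ _ := by
          have := Finset.card_insert_le X ({Y} : Finset {r : R // r ∉ Set.center R})
          simp only [Finset.card_singleton] at this
          omega
  have h3 : (vset (Kf x ∩ Kf y)).card + 1 = (Kf x ∩ Kf y).card := by
    rw [card_vset hz]
    exact Finset.card_erase_add_one (Finset.mem_inter.2 ⟨zero_mem_Kf x, zero_mem_Kf y⟩)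
  omega

lemma gamma2_single (hz : Set.center R = {0}) {x : R} (hx : x ≠ 0)
    (h2 : (Kf x).card = 2) :
    ((commutingGraph R)ᶜ).dominationNumber ≤ 1 := by
  set X : {r : R // r ∉ Set.center R} := ⟨x, not_central hz hx⟩
  have hdom : ((commutingGraph R)ᶜ).IsDominatingSet {X} := by
    intro v hv
    rw [Finset.mem_singleton] at hv
    refine ⟨X, Finset.mem_singleton_self X, compl_adj_iff.2 ⟨Ne.symm hv, ?_⟩⟩
    intro h
    have hvK : (v : R) ∈ Kf x := mem_Kf.2 h.symm
    rw [Kf_card_two hx h2] at hvK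
    rcases Finset.mem_insert.1 hvK with h' | h'
    · exact v.2 (h' ▸ (by rw [hz]; exact Set.mem_singleton 0))
    · exact hv (Subtype.ext (Finset.mem_singleton.1 h'))
  have := dom_le _ _ hdom
  simpa using this

end DomAux

open DomAux in
/-- Theorem A(ii): `γ(Γ(R)) + γ(Γ̄(R)) ≠ n - 1`. -/
theorem stmt_1 (R : Type*) [NonUnitalRing R] [Fintype R] (n : ℕ)
    (hcard : Fintype.card R = n)
    (hnc : ∃ x y : R, x * y ≠ y * x)
    (hz : Set.center R = {0}) :
    (commutingGraph R).dominationNumber + ((commutingGraph R)ᶜ).dominationNumber ≠ n - 1 := by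
  classical
  intro hsum
  set γ1 := (commutingGraph R).dominationNumber with hγ1def
  set γ2 := ((commutingGraph R)ᶜ).dominationNumber with hγ2def
  set m := Fintype.card {x : R // x ∉ Set.center R} with hmdef
  -- basic facts
  have hmem : ∀ x : R, x ∉ Set.center R ↔ x ≠ 0 := by
    intro x; rw [hz]; simp
  have hm : m + 1 = n := by
    have h1 : m = Fintype.card {x : R // ¬ x = (0 : R)} :=
      Fintype.card_congr (Equiv.subtypeEquivRight (fun x => by rw [hmem x]))
    have h2 : Fintype.card {x : R // ¬ x = (0 : R)} = Fintype.card R - Fintype.card {x : R // x = (0 : R)} :=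
      Fintype.card_subtype_compl _
    have h3 : Fintype.card {x : R // x = (0 : R)} = 1 := Fintype.card_subtype_eq (0 : R)
    have h4 : 1 ≤ Fintype.card R := Fintype.card_pos
    omega
  -- noncommuting partner
  have hex : ∀ x : R, x ≠ 0 → ∃ y, y ≠ 0 ∧ ¬ x * y = y * x := by
    intro x hx
    have hxc : x ∉ Set.center R := (hmem x).2 hx
    rw [Semigroup.mem_center_iff] at hxc
    push_neg at hxc
    obtain ⟨g, hg⟩ := hxc
    refine ⟨g, ?_, fun h => hg h.symm⟩
    intro h0
    rw [h0, zero_mul, mul_zero] at hg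
    exact hg rfl
  -- the "good pair" closure
  have win : ∀ a b : R, a ≠ 0 → b ≠ 0 → ¬ a * b = b * a →
      2 * (DomAux.Kf a ∩ DomAux.Kf b).card + 5 ≤ (DomAux.Kf a).card + (DomAux.Kf b).card → False := by
    intro a b ha hb hab hgood
    have hγ2 := DomAux.gamma2_pair hz ha hb hab
    have hγ1 := DomAux.multi_bound hz {a, b} (by
      intro r hr
      rcases Finset.mem_insert.1 hr with h | h
      · rw [h]; exact ha
      · rw [Finset.mem_singleton.1 h]; exact hb)
    have hbi : ({a, b} : Finset R).biUnion DomAux.Kf = DomAux.Kf a ∪ DomAux.Kf b := by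
      ext r; simp [Finset.mem_biUnion]
    rw [hbi] at hγ1
    have hLcard : ({a, b} : Finset R).card ≤ 2 := by
      have := Finset.card_insert_le a ({b} : Finset R)
      simp only [Finset.card_singleton] at this
      omega
    have hvc : (DomAux.vset (DomAux.Kf a ∪ DomAux.Kf b)).card + 1
        = (DomAux.Kf a ∪ DomAux.Kf b).card := by
      rw [DomAux.card_vset hz]
      exact Finset.card_erase_add_one (Finset.mem_union_left _ (DomAux.zero_mem_Kf a))
    have huc := Finset.card_union_add_card_inter (DomAux.Kf a) (DomAux.Kf b)
    omega
  -- case analysis on centralizer sizes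
  by_cases hA : ∀ x : R, x ≠ 0 → (DomAux.Kf x).card = 2
  · -- all centralizers trivial : Γ is empty
    obtain ⟨x0, y0, hx0y0⟩ := hnc
    have hx00 : x0 ≠ 0 := by
      intro h; rw [h, zero_mul, mul_zero] at hx0y0; exact hx0y0 rfl
    have hγ1lb : m ≤ γ1 := by
      apply DomAux.le_dom
      intro D hD
      have hsub : (Finset.univ : Finset {x : R // x ∉ Set.center R}) ⊆ D := by
        intro v _
        by_contra hv
        obtain ⟨u, hu, hadj⟩ := hD v hv
        rcases DomAux.adj_iff.1 hadj with ⟨hne, hc⟩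
        have hu0 : (u : R) ≠ 0 := (hmem _).1 u.2
        have hv0 : (v : R) ≠ 0 := (hmem _).1 v.2
        have hvK : (v : R) ∈ DomAux.Kf (u : R) := DomAux.mem_Kf.2 hc.symm
        rw [DomAux.Kf_card_two hu0 (hA _ hu0)] at hvK
        rcases Finset.mem_insert.1 hvK with h | h
        · exact hv0 h
        · exact hne (Subtype.ext (Finset.mem_singleton.1 h).symm)
      calc m = (Finset.univ : Finset {x : R // x ∉ Set.center R}).card :=
            (Finset.card_univ).symm
        _ ≤ D.card := Finset.card_le_card hsub
    have hγ2lb : 1 ≤ γ2 := by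
      apply DomAux.le_dom
      intro D hD
      rcases Nat.eq_zero_or_pos D.card with h0 | h1
      · exfalso
        rw [Finset.card_eq_zero] at h0
        obtain ⟨u, hu, -⟩ := hD ⟨x0, (hmem x0).2 hx00⟩ (by rw [h0]; simp)
        rw [h0] at hu
        simp at hu
      · exact h1
    omega
  · push_neg at hA
    obtain ⟨v, hv0, hv2⟩ := hA
    have hv3 : 3 ≤ (DomAux.Kf v).card := by
      have := DomAux.two_le_card_Kf hv0
      omega
    by_cases hB : ∃ u : R, u ≠ 0 ∧ (DomAux.Kf u).card = 2
    · -- there is a trivial centralizer and a big one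
      obtain ⟨u, hu0, hu2⟩ := hB
      have hu2t : u + u = 0 := DomAux.two_torsion_of_card_two hu0 hu2
      have hv4 : 4 ≤ (DomAux.Kf v).card := by
        rcases Nat.lt_or_ge (DomAux.Kf v).card 4 with h | h
        · exact absurd (by omega : (DomAux.Kf v).card = 3) (fun h3 => DomAux.no23 hu0 hu2t hv0 h3)
        · exact h
      have hγ2 := DomAux.gamma2_single hz hu0 hu2
      have hγ1 := DomAux.multi_bound hz {v} (by intro r hr; rw [Finset.mem_singleton.1 hr]; exact hv0)
      have hbi : ({v} : Finset R).biUnion DomAux.Kf = DomAux.Kf v := by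
        ext r; simp [Finset.mem_biUnion]
      rw [hbi] at hγ1
      have hvc : (DomAux.vset (DomAux.Kf v)).card + 1 = (DomAux.Kf v).card := by
        rw [DomAux.card_vset hz]
        exact Finset.card_erase_add_one (DomAux.zero_mem_Kf v)
      simp only [Finset.card_singleton] at hγ1
      omega
    · -- all centralizers have ≥ 3 elements
      push_neg at hB
      have hge3 : ∀ u : R, u ≠ 0 → 3 ≤ (DomAux.Kf u).card := by
        intro u hu
        have h2 := DomAux.two_le_card_Kf hu
        have := hB u hu
        omega
      by_cases hC : ∃ w : R, w ≠ 0 ∧ (DomAux.Kf w).card = 3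
      · -- minimal centralizer size is 3
        obtain ⟨w, hw0, hw3⟩ := hC
        have hno2t : ∀ u : R, u ≠ 0 → u + u ≠ 0 := fun u h0 h2 =>
          DomAux.no23 h0 h2 hw0 hw3
        have hodd : ¬ 2 ∣ n := by
          intro h2n
          haveI : Fact (Nat.Prime 2) := ⟨Nat.prime_two⟩
          obtain ⟨g, hg⟩ := exists_prime_addOrderOf_dvd_card (G := R) 2 (by rw [hcard]; exact h2n)
          have hg0 : g ≠ 0 := by
            intro h; rw [h, addOrderOf_zero] at hg; omega
          refine hno2t g hg0 ?_
          have := addOrderOf_nsmul_eq_zero g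
          rw [hg, two_nsmul] at this
          exact this
        have h3n : 3 ∣ n := by
          rw [← hcard]
          have := addOrderOf_dvd_card (x := w)
          rwa [DomAux.ord3 hw0 hw3] at this
        have hn3 : n ≠ 3 := by
          intro h3
          have huniv : DomAux.Kf w = Finset.univ := by
            apply Finset.eq_univ_of_card
            rw [hw3, hcard, h3]
          have : w ∈ Set.center R := Semigroup.mem_center_iff.2 (fun g =>
            DomAux.mem_Kf.1 (huniv ▸ Finset.mem_univ g))
          rw [hz] at this
          exact hw0 this
        have hn9 : 9 ≤ n := by omega
        obtain ⟨y, hy0, hwy⟩ := hex w hw0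
        have hynKw : y ∉ DomAux.Kf w := fun h => hwy (DomAux.mem_Kf.1 h).symm
        have hwnKy : w ∉ DomAux.Kf y := fun h => hwy (DomAux.mem_Kf.1 h)
        have hj1 : (DomAux.Kf w ∩ DomAux.Kf y).card = 1 := by
          have hdvd : (DomAux.Kf w ∩ DomAux.Kf y).card ∣ 3 := hw3 ▸ DomAux.inter_card_dvd w y
          have hlt : (DomAux.Kf w ∩ DomAux.Kf y).card < 3 := by
            rw [← hw3]
            apply Finset.card_lt_card
            exact ⟨Finset.inter_subset_left, fun hs =>
              hwnKy (Finset.mem_inter.1 (hs (DomAux.self_mem_Kf w))).2⟩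
          interval_cases h : (DomAux.Kf w ∩ DomAux.Kf y).card <;> omega
        rcases Nat.lt_or_ge (DomAux.Kf y).card 4 with hy3 | hy4
        · -- c_y = 3 : take a third element z
          have hy3' : (DomAux.Kf y).card = 3 := by
            have := hge3 y hy0; omega
          have hzex : 0 < ((Finset.univ : Finset R) \ (DomAux.Kf w ∪ DomAux.Kf y)).card := by
            rw [Finset.card_sdiff_of_subset (Finset.subset_univ _), Finset.card_univ, hcard]
            have h1 : (DomAux.Kf w ∪ DomAux.Kf y).card ≤ 6 := by
              have := Finset.card_union_le (DomAux.Kf w) (DomAux.Kf y)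
              omega
            omega
          obtain ⟨z, hzmem⟩ := Finset.card_pos.1 hzex
          rw [Finset.mem_sdiff, Finset.mem_union] at hzmem
          push_neg at hzmem
          obtain ⟨-, hznw, hzny⟩ := hzmem
          have hz0 : z ≠ 0 := by
            intro h; exact hznw (h ▸ DomAux.zero_mem_Kf w)
          have hz3 : 3 ≤ (DomAux.Kf z).card := hge3 z hz0
          -- pairwise trivial intersections with Kf z
          have hwz1 : DomAux.Kf w ∩ DomAux.Kf z = {0} := by
            have hdvd : (DomAux.Kf w ∩ DomAux.Kf z).card ∣ 3 := hw3 ▸ DomAux.inter_card_dvd w z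
            have hlt : (DomAux.Kf w ∩ DomAux.Kf z).card < 3 := by
              rw [← hw3]
              apply Finset.card_lt_card
              refine ⟨Finset.inter_subset_left, fun hs => ?_⟩
              have hwKz := (Finset.mem_inter.1 (hs (DomAux.self_mem_Kf w))).2
              exact hznw (DomAux.mem_Kf.2 (DomAux.mem_Kf.1 hwKz).symm)
            have hc1 : (DomAux.Kf w ∩ DomAux.Kf z).card = 1 := by
              interval_cases h : (DomAux.Kf w ∩ DomAux.Kf z).card <;> omega
            symm
            apply Finset.eq_of_subset_of_card_le
            · intro r hr
              rw [Finset.mem_singleton.1 hr]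
              exact Finset.mem_inter.2 ⟨DomAux.zero_mem_Kf w, DomAux.zero_mem_Kf z⟩
            · rw [hc1, Finset.card_singleton]
          have hyz1 : DomAux.Kf y ∩ DomAux.Kf z = {0} := by
            have hdvd : (DomAux.Kf y ∩ DomAux.Kf z).card ∣ 3 := hy3' ▸ DomAux.inter_card_dvd y z
            have hlt : (DomAux.Kf y ∩ DomAux.Kf z).card < 3 := by
              rw [← hy3']
              apply Finset.card_lt_card
              refine ⟨Finset.inter_subset_left, fun hs => ?_⟩
              have hyKz := (Finset.mem_inter.1 (hs (DomAux.self_mem_Kf y))).2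
              exact hzny (DomAux.mem_Kf.2 (DomAux.mem_Kf.1 hyKz).symm)
            have hc1 : (DomAux.Kf y ∩ DomAux.Kf z).card = 1 := by
              interval_cases h : (DomAux.Kf y ∩ DomAux.Kf z).card <;> omega
            symm
            apply Finset.eq_of_subset_of_card_le
            · intro r hr
              rw [Finset.mem_singleton.1 hr]
              exact Finset.mem_inter.2 ⟨DomAux.zero_mem_Kf y, DomAux.zero_mem_Kf z⟩
            · rw [hc1, Finset.card_singleton]
          -- union cardinality
          have hu2 : (DomAux.Kf w ∪ DomAux.Kf y).card = 5 := by
            have := Finset.card_union_add_card_inter (DomAux.Kf w) (DomAux.Kf y)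
            omega
          have hu3 : (DomAux.Kf w ∪ DomAux.Kf y ∪ DomAux.Kf z).card
              = (DomAux.Kf z).card + 4 := by
            have h := Finset.card_union_add_card_inter (DomAux.Kf w ∪ DomAux.Kf y) (DomAux.Kf z)
            have hdist : (DomAux.Kf w ∪ DomAux.Kf y) ∩ DomAux.Kf z = {0} := by
              rw [Finset.union_inter_distrib_right, hwz1, hyz1]
              simp
            rw [hdist, Finset.card_singleton] at h
            omega
          -- apply multi_bound with {w, y, z}
          have hwyz : ({w, y, z} : Finset R).biUnion DomAux.Kf
              = DomAux.Kf w ∪ DomAux.Kf y ∪ DomAux.Kf z := by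
            ext r
            simp [Finset.mem_biUnion, or_assoc, Finset.mem_union]
          have hγ1 := DomAux.multi_bound hz {w, y, z} (by
            intro r hr
            simp only [Finset.mem_insert, Finset.mem_singleton] at hr
            rcases hr with h | h | h
            · rw [h]; exact hw0
            · rw [h]; exact hy0
            · rw [h]; exact hz0)
          rw [hwyz] at hγ1
          have hLcard : ({w, y, z} : Finset R).card ≤ 3 := by
            apply le_trans (Finset.card_insert_le _ _)
            have := Finset.card_insert_le y ({z} : Finset R)
            simp only [Finset.card_singleton] at this
            omega
          have hvc : (DomAux.vset (DomAux.Kf w ∪ DomAux.Kf y ∪ DomAux.Kf z)).card + 1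
              = (DomAux.Kf w ∪ DomAux.Kf y ∪ DomAux.Kf z).card := by
            rw [DomAux.card_vset hz]
            exact Finset.card_erase_add_one
              (Finset.mem_union_left _ (Finset.mem_union_left _ (DomAux.zero_mem_Kf w)))
          have hγ2 := DomAux.gamma2_pair hz hw0 hy0 hwy
          omega
        · -- c_y ≥ 4 : good pair
          exact win w y hw0 hy0 hwy (by omega)
      · -- all centralizers have ≥ 4 elements
        push_neg at hC
        have hge4 : ∀ u : R, u ≠ 0 → 4 ≤ (DomAux.Kf u).card := by
          intro u hu
          have h3 := hge3 u hu
          have := hC u hu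
          omega
        obtain ⟨x, y, hxy⟩ := hnc
        have hx0 : x ≠ 0 := by
          intro h; rw [h, zero_mul, mul_zero] at hxy; exact hxy rfl
        have hy0 : y ≠ 0 := by
          intro h; rw [h, zero_mul, mul_zero] at hxy; exact hxy rfl
        have hynKx : y ∉ DomAux.Kf x := fun h => hxy (DomAux.mem_Kf.1 h).symm
        have hxnKy : x ∉ DomAux.Kf y := fun h => hxy (DomAux.mem_Kf.1 h)
        -- divisibility facts for the pair
        have hjx : 2 * (DomAux.Kf x ∩ DomAux.Kf y).card ≤ (DomAux.Kf x).card := by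
          apply DomAux.two_mul_le (DomAux.card_Kf_pos x) (DomAux.inter_card_dvd x y)
          apply Finset.card_lt_card
          exact ⟨Finset.inter_subset_left, fun hs =>
            hxnKy (Finset.mem_inter.1 (hs (DomAux.self_mem_Kf x))).2⟩
        have hjy : 2 * (DomAux.Kf x ∩ DomAux.Kf y).card ≤ (DomAux.Kf y).card := by
          rw [Finset.inter_comm]
          apply DomAux.two_mul_le (DomAux.card_Kf_pos y) (DomAux.inter_card_dvd y x)
          apply Finset.card_lt_card
          exact ⟨Finset.inter_subset_left, fun hs =>
            hynKx (Finset.mem_inter.1 (hs (DomAux.self_mem_Kf y))).2⟩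
        by_cases hgood : 2 * (DomAux.Kf x ∩ DomAux.Kf y).card + 5
            ≤ (DomAux.Kf x).card + (DomAux.Kf y).card
        · exact win x y hx0 hy0 hxy hgood
        · push_neg at hgood
          have hx4 := hge4 x hx0
          have hy4 := hge4 y hy0
          have hjge2 : 2 ≤ (DomAux.Kf x ∩ DomAux.Kf y).card := by omega
          -- extract a nonzero common commuting element t
          have htex : 0 < ((DomAux.Kf x ∩ DomAux.Kf y).erase 0).card := by
            have := Finset.card_erase_add_one (a := (0:R))
              (Finset.mem_inter.2 ⟨DomAux.zero_mem_Kf x, DomAux.zero_mem_Kf y⟩)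
            omega
          obtain ⟨t, ht⟩ := Finset.card_pos.1 htex
          rw [Finset.mem_erase] at ht
          obtain ⟨ht0, htmem⟩ := ht
          rw [Finset.mem_inter] at htmem
          obtain ⟨htx, hty⟩ := htmem
          obtain ⟨s, hs0, hts⟩ := hex t ht0
          have htnKs : t ∉ DomAux.Kf s := fun h => hts (DomAux.mem_Kf.1 h)
          have hsnKt : s ∉ DomAux.Kf t := fun h => hts (DomAux.mem_Kf.1 h).symm
          have hjt : 2 * (DomAux.Kf t ∩ DomAux.Kf s).card ≤ (DomAux.Kf t).card := by
            apply DomAux.two_mul_le (DomAux.card_Kf_pos t) (DomAux.inter_card_dvd t s)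
            apply Finset.card_lt_card
            exact ⟨Finset.inter_subset_left, fun hs2 =>
              htnKs (Finset.mem_inter.1 (hs2 (DomAux.self_mem_Kf t))).2⟩
          have hjs : 2 * (DomAux.Kf t ∩ DomAux.Kf s).card ≤ (DomAux.Kf s).card := by
            rw [Finset.inter_comm]
            apply DomAux.two_mul_le (DomAux.card_Kf_pos s) (DomAux.inter_card_dvd s t)
            apply Finset.card_lt_card
            exact ⟨Finset.inter_subset_left, fun hs2 =>
              hsnKt (Finset.mem_inter.1 (hs2 (DomAux.self_mem_Kf s))).2⟩
          by_cases hgood2 : 2 * (DomAux.Kf t ∩ DomAux.Kf s).card + 5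
              ≤ (DomAux.Kf t).card + (DomAux.Kf s).card
          · exact win t s ht0 hs0 hts hgood2
          · push_neg at hgood2
            have ht4 := hge4 t ht0
            have hs4 := hge4 s hs0
            have hct : (DomAux.Kf t).card = 4 := by omega
            -- now derive a contradiction : Kf t contains 5 distinct elements
            have hxt : x * t = t * x := (DomAux.mem_Kf.1 htx).symm
            have hyt : y * t = t * y := (DomAux.mem_Kf.1 hty).symm
            have hmem0 : (0 : R) ∈ DomAux.Kf t := DomAux.zero_mem_Kf t
            have hmemx : x ∈ DomAux.Kf t := DomAux.mem_Kf.2 hxt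
            have hmemt : t ∈ DomAux.Kf t := DomAux.self_mem_Kf t
            have hmemxt : x + t ∈ DomAux.Kf t := by
              rw [DomAux.mem_Kf, add_mul, mul_add, hxt]
            have hmemy : y ∈ DomAux.Kf t := DomAux.mem_Kf.2 hyt
            -- distinctness
            have d4 : x + t ≠ 0 := by
              intro h
              have hxe : x = -t := by linear_combination (norm := abel) h
              apply hxy
              have hty' := DomAux.mem_Kf.1 hty
              rw [hxe, neg_mul, mul_neg, hty']
            have d5 : x ≠ t := by
              intro h
              exact hxnKy (h ▸ hty)
            have d6 : x ≠ x + t := by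
              intro h
              exact ht0 (by linear_combination (norm := abel) h.symm)
            have d7 : x ≠ y := by
              intro h
              exact hxy (h ▸ rfl)
            have d8 : t ≠ x + t := by
              intro h
              exact hx0 (by linear_combination (norm := abel) h.symm)
            have d9 : t ≠ y := by
              intro h
              exact hynKx (h ▸ htx)
            have d10 : x + t ≠ y := by
              intro h
              apply hxnKy
              have hxe : x = y - t := by linear_combination (norm := abel) h
              rw [hxe, DomAux.mem_Kf, sub_mul, mul_sub, DomAux.mem_Kf.1 hty]
            have hsub : ({0, x, t, x + t, y} : Finset R) ⊆ DomAux.Kf t := by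
              intro r hr
              simp only [Finset.mem_insert, Finset.mem_singleton] at hr
              rcases hr with h | h | h | h | h <;> rw [h] <;> assumption
            have hcard5 : ({0, x, t, x + t, y} : Finset R).card = 5 := by
              rw [Finset.card_insert_of_notMem (by
                simp only [Finset.mem_insert, Finset.mem_singleton]
                push_neg
                exact ⟨Ne.symm hx0, Ne.symm ht0, Ne.symm d4, Ne.symm hy0⟩)]
              rw [Finset.card_insert_of_notMem (by
                simp only [Finset.mem_insert, Finset.mem_singleton]
                push_neg
                exact ⟨d5, d6, d7⟩)]
              rw [Finset.card_insert_of_notMem (by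
                simp only [Finset.mem_insert, Finset.mem_singleton]
                push_neg
                exact ⟨d8, d9⟩)]
              rw [Finset.card_insert_of_notMem (by
                simp only [Finset.mem_singleton]
                exact d10)]
              rw [Finset.card_singleton]
            have : 5 ≤ (DomAux.Kf t).card := hcard5 ▸ Finset.card_le_card hsub
            omega

end
end

section
/- Let R be a finite non-commutative ring of order n with Z(R) = {0}. Then γ(Γ(R)) + γ(Γ̄(R)) = n - 2 if and only if n is even and Γ(R) is the disjoint union of one triangle (three mutually adjacent vertices) and n - 4 isolated vertices. -/
open scoped Classical

noncomputable section

namespace SimpleGraph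

variable {V : Type*} [Fintype V] (G : SimpleGraph V)

lemma domSet_nonempty : {n | ∃ D : Finset V, G.IsDominatingSet D ∧ D.card = n}.Nonempty :=
  ⟨(Finset.univ : Finset V).card, Finset.univ, fun v hv => absurd (Finset.mem_univ v) hv, rfl⟩

lemma dominationNumber_le {D : Finset V} (hD : G.IsDominatingSet D) :
    G.dominationNumber ≤ D.card :=
  Nat.sInf_le ⟨D, hD, rfl⟩

lemma exists_min_dominating :
    ∃ D : Finset V, G.IsDominatingSet D ∧ D.card = G.dominationNumber :=
  Nat.sInf_mem (G.domSet_nonempty)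

lemma one_le_dominationNumber [Nonempty V] : 1 ≤ G.dominationNumber := by
  obtain ⟨D, hD, hc⟩ := G.exists_min_dominating
  rcases Nat.eq_zero_or_pos G.dominationNumber with h0 | h1
  · exfalso
    rw [h0, Finset.card_eq_zero] at hc
    obtain ⟨u, hu, -⟩ := hD (Classical.arbitrary V) (by simp [hc])
    simp [hc] at hu
  · exact h1

/-- Ore's bound: a graph with no isolated vertices satisfies `2γ ≤ |V|`. -/
lemma two_mul_dominationNumber_le (h : ∀ v : V, ∃ u, G.Adj v u) :
    2 * G.dominationNumber ≤ Fintype.card V := by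
  obtain ⟨D, hD, hc⟩ := G.exists_min_dominating
  have key : ∀ v ∈ D, ∃ u, u ∉ D ∧ G.Adj u v := by
    intro v hv
    by_contra hcon
    push_neg at hcon
    -- every neighbor of v is in D; then D.erase v is dominating
    have herase : G.IsDominatingSet (D.erase v) := by
      intro u hu
      by_cases huv : u = v
      · subst huv
        obtain ⟨w, hw⟩ := h u
        have hwD : w ∈ D := by
          by_contra hwD
          exact hcon w hwD hw.symm
        exact ⟨w, Finset.mem_erase.2 ⟨fun hwv => by simp [hwv] at hw, hwD⟩, hw.symm⟩
      · have huD : u ∉ D := fun huD => hu (Finset.mem_erase.2 ⟨huv, huD⟩)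
        obtain ⟨d, hd, hadj⟩ := hD u huD
        refine ⟨d, Finset.mem_erase.2 ⟨?_, hd⟩, hadj⟩
        rintro rfl
        exact hcon u huD hadj.symm
    have hle := G.dominationNumber_le herase
    have hce : (D.erase v).card = D.card - 1 := Finset.card_erase_of_mem hv
    have hpos : 0 < D.card := Finset.card_pos.2 ⟨v, hv⟩
    omega
  have hcompl : G.IsDominatingSet (Finset.univ \ D) := by
    intro v hv
    have hvD : v ∈ D := by
      by_contra h'
      exact hv (Finset.mem_sdiff.2 ⟨Finset.mem_univ v, h'⟩)
    obtain ⟨u, hu, hadj⟩ := key v hvD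
    exact ⟨u, Finset.mem_sdiff.2 ⟨Finset.mem_univ u, hu⟩, hadj⟩
  have h1 := G.dominationNumber_le hcompl
  have h2 : (Finset.univ \ D).card = Fintype.card V - D.card := by
    rw [Finset.card_sdiff_of_subset (Finset.subset_univ D), Finset.card_univ]
  have h3 : D.card ≤ Fintype.card V := by
    simpa using Finset.card_le_card (Finset.subset_univ D)
  omega

/-- removing a set all of whose members have a neighbor outside gives a dominating set -/
lemma dominationNumber_le_sub (X : Finset V)
    (h : ∀ x ∈ X, ∃ u, u ∉ X ∧ G.Adj u x) :
    G.dominationNumber ≤ Fintype.card V - X.card := by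
  have hdom : G.IsDominatingSet (Finset.univ \ X) := by
    intro v hv
    have hvX : v ∈ X := by
      by_contra h'
      exact hv (Finset.mem_sdiff.2 ⟨Finset.mem_univ v, h'⟩)
    obtain ⟨u, hu, hadj⟩ := h v hvX
    exact ⟨u, Finset.mem_sdiff.2 ⟨Finset.mem_univ u, hu⟩, hadj⟩
  have := G.dominationNumber_le hdom
  rwa [Finset.card_sdiff_of_subset (Finset.subset_univ X), Finset.card_univ] at this

omit [Fintype V] in
lemma isolated_mem_dominating {D : Finset V} (hD : G.IsDominatingSet D)
    {v : V} (hv : ∀ u, ¬ G.Adj v u) : v ∈ D := by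
  by_contra h
  obtain ⟨u, -, hadj⟩ := hD v h
  exact hv u hadj.symm

end SimpleGraph

lemma Finset.even_card_invol {α : Type*} [DecidableEq α] (f : α → α) (s : Finset α)
    (h : ∀ x ∈ s, f x ∈ s ∧ f (f x) = x ∧ f x ≠ x) : Even s.card := by
  induction s using Finset.strongInduction with
  | _ s ih =>
    rcases s.eq_empty_or_nonempty with rfl | ⟨x, hx⟩
    · simp
    · obtain ⟨hfx, hffx, hne⟩ := h x hx
      set t := (s.erase x).erase (f x) with ht
      have hsub : t ⊂ s := by
        refine Finset.ssubset_of_subset_of_ssubset ?_ (Finset.erase_ssubset hx)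
        exact Finset.erase_subset _ _
      have hcard : t.card = s.card - 2 := by
        rw [ht, Finset.card_erase_of_mem (Finset.mem_erase.2 ⟨hne, hfx⟩),
          Finset.card_erase_of_mem hx]
        omega
      have hforall : ∀ y ∈ t, f y ∈ t ∧ f (f y) = y ∧ f y ≠ y := by
        intro y hy
        have hys : y ∈ s := Finset.mem_of_mem_erase (Finset.mem_of_mem_erase hy)
        obtain ⟨h1, h2, h3⟩ := h y hys
        refine ⟨?_, h2, h3⟩
        have hyx : y ≠ x := Finset.ne_of_mem_erase (Finset.mem_of_mem_erase hy)
        have hyfx : y ≠ f x := Finset.ne_of_mem_erase hy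
        refine Finset.mem_erase.2 ⟨?_, Finset.mem_erase.2 ⟨?_, h1⟩⟩
        · intro hc; exact hyx (by rw [← h2, hc, hffx])
        · intro hc; exact hyfx (by rw [← h2, hc])
      have := ih t hsub hforall
      have h2le : 2 ≤ s.card := by
        have : f x ∈ s.erase x := Finset.mem_erase.2 ⟨hne, hfx⟩
        have h1 : 1 ≤ (s.erase x).card := Finset.card_pos.2 ⟨f x, this⟩
        have := Finset.card_erase_of_mem hx
        omega
      obtain ⟨k, hk⟩ := this
      exact ⟨k + 1, by omega⟩


section RingStuff

set_option linter.unusedSectionVars false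

variable {R : Type*} [NonUnitalRing R] [Fintype R]

def cent (x : R) : AddSubgroup R where
  carrier := {y | x * y = y * x}
  zero_mem' := by simp
  add_mem' := by
    intro a b ha hb
    simp only [Set.mem_setOf_eq] at *
    rw [mul_add, add_mul, ha, hb]
  neg_mem' := by
    intro a ha
    simp only [Set.mem_setOf_eq] at *
    rw [mul_neg, neg_mul, ha]

lemma mem_cent {x y : R} : y ∈ cent x ↔ x * y = y * x := Iff.rfl

def centF (x : R) : Finset R := Finset.univ.filter (fun y => x * y = y * x)

lemma mem_centF {x y : R} : y ∈ centF x ↔ x * y = y * x := by simp [centF]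

lemma self_mem_centF (x : R) : x ∈ centF x := mem_centF.2 rfl

lemma zero_mem_centF (x : R) : (0 : R) ∈ centF x := mem_centF.2 (by simp)

lemma centF_card_eq (x : R) : (centF x).card = Nat.card (cent x) := by
  rw [Nat.card_eq_fintype_card, Fintype.card_subtype]
  rfl

lemma centF_inter_card_eq (x y : R) :
    (centF x ∩ centF y).card = Nat.card ↥(cent x ⊓ cent y) := by
  rw [Nat.card_eq_fintype_card, Fintype.card_subtype]
  congr 1
  ext z
  simp [centF, AddSubgroup.mem_inf, mem_cent]

lemma centF_card_dvd (x : R) : (centF x).card ∣ Fintype.card R := by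
  rw [centF_card_eq]
  simpa [Nat.card_eq_fintype_card] using AddSubgroup.card_addSubgroup_dvd_card (cent x)

lemma centF_inter_card_dvd (x y : R) :
    (centF x ∩ centF y).card ∣ (centF x).card := by
  rw [centF_inter_card_eq, centF_card_eq]
  exact AddSubgroup.card_dvd_of_le inf_le_left

lemma card_smul_centF (x : R) : (centF x).card • x = 0 := by
  have hx : x ∈ cent x := mem_cent.2 rfl
  have h2 : (Nat.card ↥(cent x)) • x = 0 := by
    have h := card_nsmul_eq_zero' (G := ↥(cent x)) (x := (⟨x, hx⟩ : ↥(cent x)))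
    have h3 := congrArg Subtype.val h
    simp only [AddSubmonoidClass.coe_nsmul, ZeroMemClass.coe_zero] at h3
    exact h3
  rw [centF_card_eq]
  exact h2

lemma two_mul_le_of_dvd {a b : ℕ} (h : a ∣ b) (hne : a ≠ b) (hb : 0 < b) : 2 * a ≤ b := by
  obtain ⟨k, rfl⟩ := h
  match k with
  | 0 => omega
  | 1 => omega
  | (k + 2) => calc 2 * a = a * 2 := by ring
                _ ≤ a * (k + 2) := Nat.mul_le_mul_left a (by omega)

lemma centF_card_ne (x : R) (hx : x ∉ Set.center R) : (centF x).card ≠ Fintype.card R := by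
  intro h
  apply hx
  rw [Semigroup.mem_center_iff]
  intro g
  have : g ∈ centF x := by
    have : centF x = Finset.univ := Finset.eq_univ_of_card _ h
    simp [this]
  exact (mem_centF.1 this).symm

end RingStuff

section Vertex
set_option linter.unusedSectionVars false

variable {R : Type*} [NonUnitalRing R] [Fintype R]

lemma not_center_iff (hz : Set.center R = {0}) (x : R) : x ∉ Set.center R ↔ x ≠ 0 := by
  rw [hz]; simp

lemma card_V (hz : Set.center R = {0}) :
    Fintype.card {x : R // x ∉ Set.center R} = Fintype.card R - 1 := by
  have h1 : Fintype.card {x : R // x ∉ Set.center R} = Fintype.card {x : R // ¬ x = 0} :=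
    Fintype.card_congr (Equiv.subtypeEquivRight (fun x => by
      rw [not_center_iff hz]))
  rw [h1, Fintype.card_subtype_compl, Fintype.card_subtype_eq (0 : R)]

def nbr (v : {x : R // x ∉ Set.center R}) : Finset {x : R // x ∉ Set.center R} :=
  Finset.univ.filter (fun u => (commutingGraph R).Adj v u)

lemma mem_nbr {v u : {x : R // x ∉ Set.center R}} :
    u ∈ nbr v ↔ v ≠ u ∧ (v : R) * u = (u : R) * v := by
  simp only [nbr, Finset.mem_filter, Finset.mem_univ, true_and]
  exact Iff.rfl

lemma centF_vertex (hz : Set.center R = {0}) (v : {x : R // x ∉ Set.center R}) :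
    centF (v : R) = insert (0 : R) (insert (v : R) ((nbr v).image Subtype.val)) := by
  ext y
  simp only [Finset.mem_insert, Finset.mem_image, mem_centF]
  constructor
  · intro hc
    by_cases h0 : y = 0
    · exact Or.inl h0
    by_cases hv : y = (v : R)
    · exact Or.inr (Or.inl hv)
    · refine Or.inr (Or.inr ⟨⟨y, (not_center_iff hz y).2 h0⟩, ?_, rfl⟩)
      exact mem_nbr.2 ⟨fun he => hv (congrArg Subtype.val he).symm, hc⟩
  · rintro (rfl | rfl | ⟨u, hu, rfl⟩)
    · simp
    · rfl
    · exact (mem_nbr.1 hu).2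

lemma card_centF_vertex (hz : Set.center R = {0}) (v : {x : R // x ∉ Set.center R}) :
    (centF (v : R)).card = (nbr v).card + 2 := by
  rw [centF_vertex hz v]
  have hv0 : (v : R) ≠ 0 := (not_center_iff hz _).1 v.2
  have h1 : (v : R) ∉ (nbr v).image Subtype.val := by
    simp only [Finset.mem_image]
    rintro ⟨u, hu, huv⟩
    exact (mem_nbr.1 hu).1 (Subtype.ext huv.symm)
  have h0 : (0 : R) ∉ insert (v : R) ((nbr v).image Subtype.val) := by
    simp only [Finset.mem_insert, Finset.mem_image]
    rintro (h | ⟨u, hu, hu0⟩)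
    · exact hv0 h.symm
    · exact ((not_center_iff hz _).1 u.2) hu0
  rw [Finset.card_insert_of_notMem h0, Finset.card_insert_of_notMem h1,
    Finset.card_image_of_injective _ Subtype.val_injective]

end Vertex
section Struct
set_option linter.unusedSectionVars false

variable {R : Type*} [NonUnitalRing R] [Fintype R]

lemma adj_iff {u v : {x : R // x ∉ Set.center R}} :
    (commutingGraph R).Adj u v ↔ u ≠ v ∧ (u : R) * v = (v : R) * u := Iff.rfl

lemma mem_nbr_adj {v u : {x : R // x ∉ Set.center R}} :
    u ∈ nbr v ↔ (commutingGraph R).Adj v u := by simp [nbr]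

lemma vertex_ne_zero (hz : Set.center R = {0}) (v : {x : R // x ∉ Set.center R}) :
    (v : R) ≠ 0 := (not_center_iff hz _).1 v.2

lemma degOne (hz : Set.center R = {0}) (v : {x : R // x ∉ Set.center R})
    (h3 : (centF (v : R)).card = 3) :
    ∃ w : {x : R // x ∉ Set.center R}, (w : R) = -(v : R) ∧ nbr v = {w} ∧ w ≠ v ∧
      3 • (v : R) = 0 ∧ centF ((w : R)) = centF (v : R) := by
  have hcv := card_centF_vertex hz v
  have h1 : (nbr v).card = 1 := by omega
  obtain ⟨w, hw⟩ := Finset.card_eq_one.1 h1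
  have hwadj : w ∈ nbr v := by rw [hw]; exact Finset.mem_singleton_self w
  obtain ⟨hvw, hcomm⟩ := mem_nbr.1 hwadj
  have hwv : w ≠ v := fun h => hvw h.symm
  have hmem : ∀ z : R, z ∈ centF (v : R) ↔ z = 0 ∨ z = (v : R) ∨ z = (w : R) := by
    intro z
    rw [centF_vertex hz v, hw]
    simp
  have hsum : (v : R) + w ∈ centF (v : R) :=
    mem_centF.2 (by rw [mul_add, add_mul, hcomm])
  have hwneg : (w : R) = -(v : R) := by
    rcases (hmem _).1 hsum with h | h | h
    · exact (neg_eq_of_add_eq_zero_right h).symm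
    · exact absurd (by simpa using h : (w : R) = 0) (vertex_ne_zero hz w)
    · exact absurd (by simpa using h : (v : R) = 0) (vertex_ne_zero hz v)
  have hnegne : -(v : R) ≠ (v : R) := by
    intro h
    exact hwv (Subtype.ext (hwneg.trans h))
  have hdv : (v : R) + (v : R) ∈ centF (v : R) := mem_centF.2 (by rw [mul_add, add_mul])
  have h3v : 3 • (v : R) = 0 := by
    rcases (hmem _).1 hdv with h | h | h
    · exact absurd (neg_eq_of_add_eq_zero_right h) (by simpa using hnegne)
    · exact absurd (by simpa using h : (v : R) = 0) (vertex_ne_zero hz v)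
    · have : (v : R) + (v : R) = -(v : R) := h.trans hwneg
      have h0 : (v : R) + (v : R) + (v : R) = 0 := by rw [this, neg_add_cancel]
      calc 3 • (v : R) = (v : R) + (v : R) + (v : R) := by
            rw [succ_nsmul, two_nsmul]
        _ = 0 := h0
  have hcneg : centF ((w : R)) = centF (v : R) := by
    rw [hwneg]
    ext z
    simp only [mem_centF, neg_mul, mul_neg]
    exact neg_inj
  exact ⟨w, hwneg, hw, hwv, h3v, hcneg⟩

lemma dvd_four_ge_three {d : ℕ} (h : d ∣ 4) (h3 : 3 ≤ d) : d = 4 := by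
  have hle := Nat.le_of_dvd (by norm_num) h
  interval_cases d
  · exact absurd h (by decide)
  · rfl

lemma degTwo (hz : Set.center R = {0}) (v : {x : R // x ∉ Set.center R})
    (h4 : (centF (v : R)).card = 4)
    (hall : ∀ u : {x : R // x ∉ Set.center R},
      (nbr u).Nonempty → (centF (u : R)).card ≤ 4) :
    ∃ x y : {x : R // x ∉ Set.center R}, nbr v = {x, y} ∧ x ≠ y ∧
      centF ((x : R)) = centF (v : R) ∧ centF ((y : R)) = centF (v : R) ∧
      (commutingGraph R).Adj x y ∧ (commutingGraph R).Adj v x ∧ (commutingGraph R).Adj v y := by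
  have hcv := card_centF_vertex hz v
  have h2 : (nbr v).card = 2 := by omega
  obtain ⟨x, y, hxy, hN⟩ := Finset.card_eq_two.1 h2
  have hx : x ∈ nbr v := by rw [hN]; simp
  have hy : y ∈ nbr v := by rw [hN]; simp
  have key : ∀ u, u ∈ nbr v → centF ((u : R)) = centF (v : R) := by
    intro u hu
    obtain ⟨hne, hcomm⟩ := mem_nbr.1 hu
    have hvne : (v : R) ≠ (u : R) := fun h => hne (Subtype.ext h)
    have hsub : ({0, (v : R), (u : R)} : Finset R) ⊆ centF (v : R) ∩ centF (u : R) := by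
      intro z hz'
      simp only [Finset.mem_insert, Finset.mem_singleton] at hz'
      rcases hz' with rfl | rfl | rfl
      · exact Finset.mem_inter.2 ⟨zero_mem_centF _, zero_mem_centF _⟩
      · exact Finset.mem_inter.2 ⟨self_mem_centF _, mem_centF.2 hcomm.symm⟩
      · exact Finset.mem_inter.2 ⟨mem_centF.2 hcomm, self_mem_centF _⟩
    have hc3 : 3 ≤ (centF (v : R) ∩ centF (u : R)).card := by
      have hcard3 : ({0, (v : R), (u : R)} : Finset R).card = 3 :=
        Finset.card_eq_three.2 ⟨0, v, u, (vertex_ne_zero hz v).symm,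
          (vertex_ne_zero hz u).symm, hvne, rfl⟩
      calc 3 = ({0, (v : R), (u : R)} : Finset R).card := hcard3.symm
        _ ≤ _ := Finset.card_le_card hsub
    have hdvd := centF_inter_card_dvd (v : R) (u : R)
    rw [h4] at hdvd
    have hceq : (centF (v : R) ∩ centF (u : R)).card = 4 := dvd_four_ge_three hdvd hc3
    have he : centF (v : R) ∩ centF (u : R) = centF (v : R) :=
      Finset.eq_of_subset_of_card_le Finset.inter_subset_left (by omega)
    have hsub2 : centF (v : R) ⊆ centF ((u : R)) := by
      rw [← he]; exact Finset.inter_subset_right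
    have hune : (nbr u).Nonempty := ⟨v, mem_nbr.2 ⟨hne.symm, hcomm.symm⟩⟩
    have hle4 := hall u hune
    exact (Finset.eq_of_subset_of_card_le hsub2 (by omega)).symm
  have hcx := key x hx
  have hcy := key y hy
  obtain ⟨hnex, hcommx⟩ := mem_nbr.1 hx
  obtain ⟨hney, hcommy⟩ := mem_nbr.1 hy
  have hyx : (y : R) ∈ centF ((x : R)) := by
    rw [hcx]
    exact mem_centF.2 hcommy
  exact ⟨x, y, hN, hxy, hcx, hcy, ⟨hxy, mem_centF.1 hyx⟩, ⟨hnex, hcommx⟩, ⟨hney, hcommy⟩⟩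

lemma natCard_eq_filter (H : AddSubgroup R) :
    Nat.card H = (Finset.univ.filter (fun z => z ∈ H)).card := by
  rw [Nat.card_eq_fintype_card, Fintype.card_subtype]

lemma card_smul_mem {H : AddSubgroup R} {x : R} (hx : x ∈ H) :
    (Nat.card H) • x = 0 := by
  have h := card_nsmul_eq_zero' (G := ↥H) (x := (⟨x, hx⟩ : ↥H))
  have h3 := congrArg Subtype.val h
  simp only [AddSubmonoidClass.coe_nsmul, ZeroMemClass.coe_zero] at h3
  exact h3

end Struct
def tor3 (R : Type*) [AddCommGroup R] : AddSubgroup R where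
  carrier := {z : R | (3 : ℕ) • z = 0}
  zero_mem' := by simp
  add_mem' := by
    intro a b ha hb
    simp only [Set.mem_setOf_eq] at *
    rw [smul_add, ha, hb, add_zero]
  neg_mem' := by
    intro a ha
    simp only [Set.mem_setOf_eq] at *
    rw [smul_neg, ha, neg_zero]

lemma divisor_class {c n : ℕ} (h1 : c ∣ n) (h2 : 3 ≤ c) (h3 : 2*c ≤ n) (h4 : n ≤ 10) (h5 : 3 ≤ n) :
    (n=6 ∧ c=3) ∨ (n=8 ∧ c=4) ∨ (n=9 ∧ c=3) ∨ (n=10 ∧ c=5) := by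
  have hc5 : c ≤ 5 := by omega
  interval_cases n <;> interval_cases c <;> omega


set_option maxHeartbeats 1000000 in
/-- Theorem A(iii): `γ(Γ(R)) + γ(Γ̄(R)) = n - 2` iff `n` is even and `Γ(R)` is the
disjoint union of one triangle and `n - 4` isolated vertices. -/
theorem stmt_2 (R : Type*) [NonUnitalRing R] [Fintype R] (n : ℕ)
    (hcard : Fintype.card R = n)
    (hnc : ∃ x y : R, x * y ≠ y * x)
    (hz : Set.center R = {0}) :
    (commutingGraph R).dominationNumber + ((commutingGraph R)ᶜ).dominationNumber = n - 2 ↔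
      (Even n ∧ ∃ a b c : {x : R // x ∉ Set.center R},
        a ≠ b ∧ a ≠ c ∧ b ≠ c ∧
        (commutingGraph R).Adj a b ∧ (commutingGraph R).Adj a c ∧
        (commutingGraph R).Adj b c ∧
        ∀ u v, (commutingGraph R).Adj u v → u = a ∨ u = b ∨ u = c) := by
  classical
  obtain ⟨x0, y0, hxy0⟩ := hnc
  have hx0 : x0 ∉ Set.center R := by
    intro h
    exact hxy0 ((Semigroup.mem_center_iff.1 h) y0).symm
  have hy0 : y0 ∉ Set.center R := by
    intro h
    exact hxy0 ((Semigroup.mem_center_iff.1 h) x0)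
  set V := {x : R // x ∉ Set.center R}
  set Γ := commutingGraph R with hΓ
  have hm : Fintype.card V = n - 1 := by rw [card_V hz, hcard]
  set vx : V := ⟨x0, hx0⟩
  set vy : V := ⟨y0, hy0⟩
  have hvxy : vx ≠ vy := by
    intro h
    exact hxy0 (by rw [show x0 = y0 from congrArg Subtype.val h])
  have hnV : Nonempty V := ⟨vx⟩
  have hm2 : 2 ≤ Fintype.card V := Fintype.one_lt_card_iff.2 ⟨vx, vy, hvxy⟩
  have hn3 : 3 ≤ n := by omega
  have hγ1pos := Γ.one_le_dominationNumber
  have hγ2pos := (Γᶜ).one_le_dominationNumber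
  have hcardV_le : ∀ s : Finset V, s.card ≤ Fintype.card V := fun s => by
    simpa using Finset.card_le_card (Finset.subset_univ s)
  have hnegV : ∀ v : V, (-((v : R))) ∉ Set.center R := fun v =>
    (not_center_iff hz _).2 (neg_ne_zero.2 (vertex_ne_zero hz v))
  constructor
  · intro hsum
    by_cases hiso : ∃ v : V, nbr v = ∅
    ·
      obtain ⟨v0, hv0⟩ := hiso
      have hv0iso : ∀ u, ¬ Γ.Adj v0 u := by
        intro u hadj
        have hmm : u ∈ nbr v0 := mem_nbr_adj.2 hadj
        rw [hv0] at hmm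
        simp at hmm
      have hγ2 : (Γᶜ).dominationNumber = 1 := by
        refine le_antisymm ?_ hγ2pos
        have hdom : (Γᶜ).IsDominatingSet {v0} := by
          intro u hu
          have huv0 : u ≠ v0 := by simpa using hu
          exact ⟨v0, Finset.mem_singleton_self v0,
            (SimpleGraph.compl_adj _ _ _).2 ⟨huv0.symm, fun hadj => hv0iso u hadj⟩⟩
        simpa using (Γᶜ).dominationNumber_le hdom
      have hγ1 : Γ.dominationNumber = n - 3 := by omega
      have hn4 : 4 ≤ n := by omega
      have hdeg : ∀ v : V, (nbr v).card ≤ 2 := by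
        intro v
        have hvnm : v ∉ nbr v := by
          rw [mem_nbr_adj]
          exact fun h => Γ.irrefl h
        have hb := Γ.dominationNumber_le_sub (nbr v)
          (fun x hx => ⟨v, hvnm, mem_nbr_adj.1 hx⟩)
        have hle := hcardV_le (nbr v)
        rw [hm] at hb hle
        omega
      have hall : ∀ u : V, (nbr u).Nonempty → (centF (u : R)).card ≤ 4 := by
        intro u _
        have h1 := card_centF_vertex hz u
        have h2 := hdeg u
        omega
      set I : Finset V := Finset.univ.filter (fun v : V => (nbr v).card = 0) with hI
      set A : Finset V := Finset.univ.filter (fun v : V => (nbr v).card = 1) with hA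
      set B : Finset V := Finset.univ.filter (fun v : V => (nbr v).card = 2) with hB
      have hpart : I.card + A.card + B.card = Fintype.card V := by
        have hdisjIA : Disjoint I A := by
          rw [Finset.disjoint_left]
          intro v hvI hvA
          rw [hI, Finset.mem_filter] at hvI
          rw [hA, Finset.mem_filter] at hvA
          omega
        have hdisjIAB : Disjoint (I ∪ A) B := by
          rw [Finset.disjoint_left]
          intro v hvIA hvB
          rw [hB, Finset.mem_filter] at hvB
          rcases Finset.mem_union.1 hvIA with h | h
          · rw [hI, Finset.mem_filter] at h; omega
          · rw [hA, Finset.mem_filter] at h; omega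
        have hcover : I ∪ A ∪ B = Finset.univ := by
          ext v
          simp only [Finset.mem_union, hI, hA, hB, Finset.mem_filter, Finset.mem_univ,
            true_and, iff_true]
          have := hdeg v
          omega
        calc I.card + A.card + B.card = (I ∪ A).card + B.card := by
              rw [Finset.card_union_of_disjoint hdisjIA]
          _ = (I ∪ A ∪ B).card := (Finset.card_union_of_disjoint hdisjIAB).symm
          _ = Fintype.card V := by rw [hcover, Finset.card_univ]
      obtain ⟨D, hD, hDcard⟩ := Γ.exists_min_dominating
      have hID : I ⊆ D := by
        intro v hvI
        rw [hI, Finset.mem_filter] at hvI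
        refine Γ.isolated_mem_dominating hD (fun u hadj => ?_)
        have hmm : u ∈ nbr v := mem_nbr_adj.2 hadj
        have := Finset.card_pos.2 ⟨u, hmm⟩
        omega
      have hIcard : I.card ≤ D.card := Finset.card_le_card hID
      have hDlower : ∀ v : V, 1 ≤ (nbr v).card → I.card + 1 ≤ D.card := by
        intro v hv1
        have hextra : ∃ u0 ∈ D, u0 ∉ I := by
          by_cases hvD : v ∈ D
          · refine ⟨v, hvD, fun hvI => ?_⟩
            rw [hI, Finset.mem_filter] at hvI
            omega
          · obtain ⟨u, huD, hadj⟩ := hD v hvD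
            refine ⟨u, huD, fun huI => ?_⟩
            rw [hI, Finset.mem_filter] at huI
            have hmm : v ∈ nbr u := mem_nbr_adj.2 hadj
            have := Finset.card_pos.2 ⟨v, hmm⟩
            omega
        obtain ⟨u0, hu0D, hu0I⟩ := hextra
        have hins : insert u0 I ⊆ D := by
          intro w hw
          rcases Finset.mem_insert.1 hw with rfl | hw
          · exact hu0D
          · exact hID hw
        have := Finset.card_le_card hins
        rw [Finset.card_insert_of_notMem hu0I] at this
        omega
      by_cases hBne : B.Nonempty
      · obtain ⟨v, hvB⟩ := hBne
        have hvB2 : (nbr v).card = 2 := by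
          rw [hB, Finset.mem_filter] at hvB; exact hvB.2
        have h4 : (centF (v : R)).card = 4 := by rw [card_centF_vertex hz v]; omega
        obtain ⟨x, y, hNv, hxy, hcx, hcy, hadjxy, hadjvx, hadjvy⟩ := degTwo hz v h4 hall
        have hxB : x ∈ B := by
          rw [hB, Finset.mem_filter]
          have h1 := card_centF_vertex hz x
          rw [hcx, h4] at h1
          exact ⟨Finset.mem_univ _, by omega⟩
        have hyB : y ∈ B := by
          rw [hB, Finset.mem_filter]
          have h1 := card_centF_vertex hz y
          rw [hcy, h4] at h1
          exact ⟨Finset.mem_univ _, by omega⟩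
        have hvx' : v ≠ x := hadjvx.ne
        have hvy' : v ≠ y := hadjvy.ne
        have htri : ∀ w : V, centF ((w : R)) = centF ((v : R)) → (w = v ∨ w = x ∨ w = y) := by
          intro w hcw
          have hu : (w : R) ∈ centF ((v : R)) := by rw [← hcw]; exact self_mem_centF _
          rw [centF_vertex hz v, hNv] at hu
          simp only [Finset.image_insert, Finset.image_singleton, Finset.mem_insert,
            Finset.mem_singleton] at hu
          rcases hu with h | h | h | h
          · exact absurd h (vertex_ne_zero hz w)
          · exact Or.inl (Subtype.ext h)
          · exact Or.inr (Or.inl (Subtype.ext h))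
          · exact Or.inr (Or.inr (Subtype.ext h))
        by_cases hAne : A.Nonempty
        · exfalso
          obtain ⟨a, haA⟩ := hAne
          have haA1 : (nbr a).card = 1 := by
            rw [hA, Finset.mem_filter] at haA; exact haA.2
          have ha3 : (centF ((a : R))).card = 3 := by rw [card_centF_vertex hz a]; omega
          obtain ⟨w, hw1, hwN, hwa, h3a, hcw⟩ := degOne hz a ha3
          have hwcard : (centF ((w : R))).card = 3 := by rw [hcw]; exact ha3
          have hax : a ≠ x := by
            intro h
            have h1 : (centF ((x : R))).card = 3 := by rw [← h]; exact ha3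
            rw [hcx, h4] at h1
            omega
          have hay : a ≠ y := by
            intro h
            have h1 : (centF ((y : R))).card = 3 := by rw [← h]; exact ha3
            rw [hcy, h4] at h1
            omega
          have hwx : w ≠ x := by
            intro h
            have h1 : (centF ((x : R))).card = 3 := by rw [← h]; exact hwcard
            rw [hcx, h4] at h1
            omega
          have hwy : w ≠ y := by
            intro h
            have h1 : (centF ((y : R))).card = 3 := by rw [← h]; exact hwcard
            rw [hcy, h4] at h1
            omega
          have hva : v ≠ a := by
            intro h
            have h1 : (nbr a).card = 2 := by rw [← h]; exact hvB2
            omega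
          have hX : ∀ z ∈ ({a, x, y} : Finset V),
              ∃ u, u ∉ ({a, x, y} : Finset V) ∧ Γ.Adj u z := by
            intro z hzX
            simp only [Finset.mem_insert, Finset.mem_singleton] at hzX
            rcases hzX with rfl | rfl | rfl
            · have hwadj : w ∈ nbr z := by rw [hwN]; simp
              exact ⟨w, by simp [hwa, hwx, hwy], (mem_nbr_adj.1 hwadj).symm⟩
            · exact ⟨v, by simp [hva, hvx', hvy'], hadjvx⟩
            · exact ⟨v, by simp [hva, hvx', hvy'], hadjvy⟩
          have hcardX : ({a, x, y} : Finset V).card = 3 := by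
            rw [Finset.card_insert_of_notMem (by simp [hax, hay]),
              Finset.card_insert_of_notMem (by simpa using hxy), Finset.card_singleton]
          have hbnd := Γ.dominationNumber_le_sub {a, x, y} hX
          rw [hcardX, hm] at hbnd
          omega
        · have hAempty : A = ∅ := Finset.not_nonempty_iff_eq_empty.1 hAne
          have hsubB : ({v, x, y} : Finset V) ⊆ B := by
            intro z hzX
            simp only [Finset.mem_insert, Finset.mem_singleton] at hzX
            rcases hzX with rfl | rfl | rfl
            · exact hvB
            · exact hxB
            · exact hyB
          have hcard3 : ({v, x, y} : Finset V).card = 3 := by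
            rw [Finset.card_insert_of_notMem (by simp [hvx', hvy']),
              Finset.card_insert_of_notMem (by simpa using hxy), Finset.card_singleton]
          by_cases hB4 : 4 ≤ B.card
          · exfalso
            have hex : ∃ v' ∈ B, v' ∉ ({v, x, y} : Finset V) := by
              by_contra hcon
              push_neg at hcon
              have hsub : B ⊆ {v, x, y} := fun z hzB => hcon z hzB
              have := Finset.card_le_card hsub
              omega
            obtain ⟨v', hv'B, hv'X⟩ := hex
            have hv'B2 : (nbr v').card = 2 := by
              rw [hB, Finset.mem_filter] at hv'B; exact hv'B.2
            have h4' : (centF ((v' : R))).card = 4 := by rw [card_centF_vertex hz v']; omega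
            obtain ⟨x', y', hNv', hxy', hcx', hcy', hadjxy', hadjvx', hadjvy'⟩ :=
              degTwo hz v' h4' hall
            have hcne : centF ((v' : R)) ≠ centF ((v : R)) := by
              intro he
              rcases htri v' he with rfl | rfl | rfl <;> simp at hv'X
            have hcross : ∀ w : V, centF ((w : R)) = centF ((v : R)) →
                centF ((w : R)) = centF ((v' : R)) → False :=
              fun w h1 h2 => hcne (h2.symm.trans h1)
            have hxx' : x ≠ x' := by
              intro h
              exact hcross x hcx (by rw [h]; exact hcx')
            have hxy'2 : x ≠ y' := by
              intro h
              exact hcross x hcx (by rw [h]; exact hcy')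
            have hyx' : y ≠ x' := by
              intro h
              exact hcross y hcy (by rw [h]; exact hcx')
            have hyy' : y ≠ y' := by
              intro h
              exact hcross y hcy (by rw [h]; exact hcy')
            have hvx'2 : v ≠ x' := by
              intro h
              exact hcne (by rw [← hcx']; rw [← h])
            have hvy'2 : v ≠ y' := by
              intro h
              exact hcne (by rw [← hcy']; rw [← h])
            have hv'x : v' ≠ x := by
              intro h
              exact hcne (by rw [← hcx]; rw [← h])
            have hv'y : v' ≠ y := by
              intro h
              exact hcne (by rw [← hcy]; rw [← h])
            have hv'x' : v' ≠ x' := hadjvx'.ne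
            have hv'y' : v' ≠ y' := hadjvy'.ne
            have hcardX : ({x, y, x', y'} : Finset V).card = 4 := by
              rw [Finset.card_insert_of_notMem (by simp [hxy, hxx', hxy'2]),
                Finset.card_insert_of_notMem (by simp [hyx', hyy']),
                Finset.card_insert_of_notMem (by simpa using hxy'), Finset.card_singleton]
            have hX : ∀ z ∈ ({x, y, x', y'} : Finset V),
                ∃ u, u ∉ ({x, y, x', y'} : Finset V) ∧ Γ.Adj u z := by
              intro z hzX
              simp only [Finset.mem_insert, Finset.mem_singleton] at hzX
              rcases hzX with rfl | rfl | rfl | rfl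
              · exact ⟨v, by simp [hvx', hvy', hvx'2, hvy'2], hadjvx⟩
              · exact ⟨v, by simp [hvx', hvy', hvx'2, hvy'2], hadjvy⟩
              · exact ⟨v', by simp [hv'x, hv'y, hv'x', hv'y'], hadjvx'⟩
              · exact ⟨v', by simp [hv'x, hv'y, hv'x', hv'y'], hadjvy'⟩
            have hbnd := Γ.dominationNumber_le_sub {x, y, x', y'} hX
            rw [hcardX, hm] at hbnd
            omega
          · have hBeq : B = {v, x, y} := by
              refine (Finset.eq_of_subset_of_card_le hsubB ?_).symm
              omega
            refine ⟨?_, v, x, y, hvx', hvy', hxy, hadjvx, hadjvy, hadjxy, ?_⟩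
            · have h4dvd : (centF ((v : R))).card ∣ n := hcard ▸ centF_card_dvd (v : R)
              rw [h4] at h4dvd
              obtain ⟨k, hk⟩ := h4dvd
              exact ⟨2 * k, by omega⟩
            · intro u w hadj
              have hu1 : 1 ≤ (nbr u).card := Finset.card_pos.2 ⟨w, mem_nbr_adj.2 hadj⟩
              have hu2 := hdeg u
              have hunotA : u ∉ A := by rw [hAempty]; simp
              have huB : u ∈ B := by
                rw [hB, Finset.mem_filter]
                refine ⟨Finset.mem_univ _, ?_⟩
                by_contra hne2
                apply hunotA
                rw [hA, Finset.mem_filter]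
                exact ⟨Finset.mem_univ _, by omega⟩
              rw [hBeq] at huB
              simpa using huB
      · have hBempty : B = ∅ := Finset.not_nonempty_iff_eq_empty.1 hBne
        have hBcard0 : B.card = 0 := by rw [hBempty]; simp
        exfalso
        by_cases hAne : A.Nonempty
        · have hAstruct : ∀ a : V, a ∈ A → ∃ w : V, (w : R) = -((a : R)) ∧ nbr a = {w} ∧
              w ≠ a ∧ 3 • ((a : R)) = 0 ∧ w ∈ A := by
            intro a haA
            have haA1 : (nbr a).card = 1 := by
              rw [hA, Finset.mem_filter] at haA; exact haA.2
            have ha3 : (centF ((a : R))).card = 3 := by rw [card_centF_vertex hz a]; omega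
            obtain ⟨w, hw1, hwN, hwa, h3a, hcw⟩ := degOne hz a ha3
            refine ⟨w, hw1, hwN, hwa, h3a, ?_⟩
            rw [hA, Finset.mem_filter]
            have hwc : (centF ((w : R))).card = 3 := by rw [hcw]; exact ha3
            have := card_centF_vertex hz w
            exact ⟨Finset.mem_univ _, by omega⟩
          obtain ⟨a1, ha1⟩ := hAne
          have h1le : 1 ≤ (nbr a1).card := by
            rw [hA, Finset.mem_filter] at ha1; omega
          have hlow := hDlower a1 h1le
          have hA3 : 3 ≤ A.card := by omega
          have hevenA : Even A.card := by
            apply Finset.even_card_invol (fun v : V => (⟨-((v : R)), hnegV v⟩ : V))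
            intro a haA
            obtain ⟨w, hw1, hwN, hwa, h3a, hwA⟩ := hAstruct a haA
            have hfa : (⟨-((a : R)), hnegV a⟩ : V) = w := Subtype.ext (by rw [hw1])
            refine ⟨by rw [hfa]; exact hwA, Subtype.ext (by simp), ?_⟩
            rw [hfa]
            exact hwa
          by_cases hA6 : 6 ≤ A.card
          · obtain ⟨w1, hw11, hw1N, hw1a, -, hw1A⟩ := hAstruct a1 ha1
            have hex2 : ∃ a2 ∈ A, a2 ∉ ({a1, w1} : Finset V) := by
              by_contra hcon
              push_neg at hcon
              have hsub : A ⊆ {a1, w1} := fun z hz' => hcon z hz'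
              have h1 := Finset.card_le_card hsub
              have h2 : ({a1, w1} : Finset V).card ≤ 2 := Finset.card_insert_le _ _
              omega
            obtain ⟨a2, ha2A, ha2X⟩ := hex2
            obtain ⟨w2, hw21, hw2N, hw2a, -, hw2A⟩ := hAstruct a2 ha2A
            have hex3 : ∃ a3 ∈ A, a3 ∉ ({a1, w1, a2, w2} : Finset V) := by
              by_contra hcon
              push_neg at hcon
              have hsub : A ⊆ {a1, w1, a2, w2} := fun z hz' => hcon z hz'
              have h1 := Finset.card_le_card hsub
              have h2 : ({a1, w1, a2, w2} : Finset V).card ≤ 4 := by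
                calc ({a1, w1, a2, w2} : Finset V).card ≤ ({w1, a2, w2} : Finset V).card + 1 :=
                      Finset.card_insert_le _ _
                  _ ≤ ({a2, w2} : Finset V).card + 1 + 1 := by
                      have := Finset.card_insert_le w1 ({a2, w2} : Finset V)
                      omega
                  _ ≤ 4 := by
                      have := Finset.card_insert_le a2 ({w2} : Finset V)
                      simp at this
                      omega
              omega
            obtain ⟨a3, ha3A, ha3X⟩ := hex3
            obtain ⟨w3, hw31, hw3N, hw3a, -, hw3A⟩ := hAstruct a3 ha3A
            simp only [Finset.mem_insert, Finset.mem_singleton, not_or] at ha2X ha3X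
            obtain ⟨ha2a1, ha2w1⟩ := ha2X
            obtain ⟨ha3a1, ha3w1, ha3a2, ha3w2⟩ := ha3X
            have ha1a2 : a1 ≠ a2 := fun h => ha2a1 h.symm
            have ha1a3 : a1 ≠ a3 := fun h => ha3a1 h.symm
            have ha2a3 : a2 ≠ a3 := fun h => ha3a2 h.symm
            have hw1a2 : w1 ≠ a2 := fun h => ha2w1 h.symm
            have hw1a3 : w1 ≠ a3 := fun h => ha3w1 h.symm
            have hw2a1 : w2 ≠ a1 := by
              intro h
              apply ha2w1
              apply Subtype.ext
              rw [hw11, ← h, hw21]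
              exact (neg_neg _).symm
            have hw2a3 : w2 ≠ a3 := fun h => ha3w2 h.symm
            have hw3a1 : w3 ≠ a1 := by
              intro h
              apply ha3w1
              apply Subtype.ext
              rw [hw11, ← h, hw31]
              exact (neg_neg _).symm
            have hw3a2 : w3 ≠ a2 := by
              intro h
              apply ha3w2
              apply Subtype.ext
              rw [hw21, ← h, hw31]
              exact (neg_neg _).symm
            have hcardX : ({a1, a2, a3} : Finset V).card = 3 := by
              rw [Finset.card_insert_of_notMem (by simp [ha1a2, ha1a3]),
                Finset.card_insert_of_notMem (by simpa using ha2a3), Finset.card_singleton]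
            have hX : ∀ z ∈ ({a1, a2, a3} : Finset V),
                ∃ u, u ∉ ({a1, a2, a3} : Finset V) ∧ Γ.Adj u z := by
              intro z hzX
              simp only [Finset.mem_insert, Finset.mem_singleton] at hzX
              rcases hzX with rfl | rfl | rfl
              · have hwadj : w1 ∈ nbr z := by rw [hw1N]; simp
                exact ⟨w1, by simp [hw1a, hw1a2, hw1a3], (mem_nbr_adj.1 hwadj).symm⟩
              · have hwadj : w2 ∈ nbr z := by rw [hw2N]; simp
                exact ⟨w2, by simp [hw2a, hw2a1, hw2a3], (mem_nbr_adj.1 hwadj).symm⟩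
              · have hwadj : w3 ∈ nbr z := by rw [hw3N]; simp
                exact ⟨w3, by simp [hw3a, hw3a1, hw3a2], (mem_nbr_adj.1 hwadj).symm⟩
            have hbnd := Γ.dominationNumber_le_sub {a1, a2, a3} hX
            rw [hcardX, hm] at hbnd
            omega
          · have hA4 : A.card = 4 := by
              rcases hevenA with ⟨k, hk⟩
              omega
            have htorF : Finset.univ.filter (fun z : R => z ∈ tor3 R)
                = insert (0 : R) (A.image Subtype.val) := by
              ext z
              simp only [Finset.mem_filter, Finset.mem_univ, true_and, Finset.mem_insert,
                Finset.mem_image]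
              constructor
              · intro hzm
                have h3z : (3 : ℕ) • z = 0 := hzm
                by_cases h0 : z = 0
                · exact Or.inl h0
                · right
                  refine ⟨⟨z, (not_center_iff hz z).2 h0⟩, ?_, rfl⟩
                  set u : V := ⟨z, (not_center_iff hz z).2 h0⟩ with hu
                  have hu2 := hdeg u
                  have hunotB : u ∉ B := by rw [hBempty]; simp
                  rw [hB, Finset.mem_filter] at hunotB
                  simp only [Finset.mem_univ, true_and] at hunotB
                  have hunotI : (nbr u).card ≠ 0 := by
                    intro hiso0
                    have h2c : (centF ((u : R))).card = 2 := by
                      rw [card_centF_vertex hz u, hiso0]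
                    have h2z : (2 : ℕ) • z = 0 := by
                      have := card_smul_centF ((u : R))
                      rw [h2c] at this
                      exact this
                    apply h0
                    have hcalc : z = (3 : ℕ) • z - ((2 : ℕ) • z) := by abel
                    rw [h3z, h2z] at hcalc
                    simpa using hcalc
                  rw [hA, Finset.mem_filter]
                  exact ⟨Finset.mem_univ _, by omega⟩
              · rintro (rfl | ⟨u, huA, rfl⟩)
                · exact (tor3 R).zero_mem
                · obtain ⟨w, -, -, -, h3a, -⟩ := hAstruct u huA
                  exact h3a
            have hcardtor : Nat.card (tor3 R) = 5 := by
              rw [natCard_eq_filter, htorF,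
                Finset.card_insert_of_notMem (by
                  intro hcon
                  obtain ⟨u, -, h⟩ := Finset.mem_image.1 hcon
                  exact vertex_ne_zero hz u h),
                Finset.card_image_of_injective _ Subtype.val_injective, hA4]
            obtain ⟨w, -, -, -, h3a1, -⟩ := hAstruct a1 ha1
            have hmemtor : (a1 : R) ∈ tor3 R := h3a1
            have h5a := card_smul_mem hmemtor
            rw [hcardtor] at h5a
            have h2a : (2 : ℕ) • ((a1 : R)) = 0 := by
              have hcalc : (2 : ℕ) • ((a1 : R)) = (5 : ℕ) • ((a1 : R)) - (3 : ℕ) • ((a1 : R)) := by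
                abel
              rw [h5a, h3a1] at hcalc
              simpa using hcalc
            have hz0 : (a1 : R) = 0 := by
              have hcalc : (a1 : R) = (3 : ℕ) • ((a1 : R)) - (2 : ℕ) • ((a1 : R)) := by abel
              rw [h3a1, h2a] at hcalc
              simpa using hcalc
            exact vertex_ne_zero hz a1 hz0
        · have hallI : ∀ v : V, v ∈ I := by
            intro v
            rw [hI, Finset.mem_filter]
            have h2 := hdeg v
            have hnotA : v ∉ A := by rw [Finset.not_nonempty_iff_eq_empty.1 hAne]; simp
            have hnotB : v ∉ B := by rw [hBempty]; simp
            rw [hA, Finset.mem_filter] at hnotA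
            rw [hB, Finset.mem_filter] at hnotB
            simp only [Finset.mem_univ, true_and] at hnotA hnotB
            exact ⟨Finset.mem_univ _, by omega⟩
          have hsub : Finset.univ ⊆ D := fun v _ => hID (hallI v)
          have hcu := Finset.card_le_card hsub
          rw [Finset.card_univ, hm, hDcard] at hcu
          omega
    ·
      -- no isolated vertices
      exfalso
      push_neg at hiso
      have hnei : ∀ v : V, (nbr v).Nonempty := fun v => hiso v
      have hOre : 2 * Γ.dominationNumber ≤ Fintype.card V :=
        Γ.two_mul_dominationNumber_le (fun v => by
          obtain ⟨u, hu⟩ := hnei v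
          exact ⟨u, mem_nbr_adj.1 hu⟩)
      rw [hm] at hOre
      set t := (centF x0 ∩ centF y0).card with htdef
      have ht1 : 1 ≤ t := Finset.card_pos.2
        ⟨0, Finset.mem_inter.2 ⟨zero_mem_centF _, zero_mem_centF _⟩⟩
      have hγ2le : (Γᶜ).dominationNumber ≤ t + 1 := by
        set T' : Finset V := Finset.univ.filter
          (fun u : V => x0 * u.1 = u.1 * x0 ∧ y0 * u.1 = u.1 * y0) with hT'
        have hdom : (Γᶜ).IsDominatingSet (insert vx (insert vy T')) := by
          intro u hu
          have hux : u ≠ vx := fun h => hu (by rw [h]; simp)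
          have huy : u ≠ vy := fun h => hu (by rw [h]; simp)
          have hnot : ¬(x0 * u.1 = u.1 * x0 ∧ y0 * u.1 = u.1 * y0) := by
            intro h
            exact hu (by simp [hT', Finset.mem_filter, h])
          rcases not_and_or.1 hnot with h | h
          · exact ⟨vx, by simp, (SimpleGraph.compl_adj _ _ _).2 ⟨hux.symm, fun hadj => h hadj.2⟩⟩
          · exact ⟨vy, by simp, (SimpleGraph.compl_adj _ _ _).2 ⟨huy.symm, fun hadj => h hadj.2⟩⟩
        have hcD := (Γᶜ).dominationNumber_le hdom
        have hT'card : T'.card ≤ t - 1 := by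
          have himg : T'.image Subtype.val ⊆ (centF x0 ∩ centF y0).erase 0 := by
            intro z hzm
            obtain ⟨u, hu, rfl⟩ := Finset.mem_image.1 hzm
            have hmm := (Finset.mem_filter.1 hu).2
            exact Finset.mem_erase.2 ⟨vertex_ne_zero hz u,
              Finset.mem_inter.2 ⟨mem_centF.2 hmm.1, mem_centF.2 hmm.2⟩⟩
          have hle := Finset.card_le_card himg
          rwa [Finset.card_image_of_injective _ Subtype.val_injective,
            Finset.card_erase_of_mem
              (Finset.mem_inter.2 ⟨zero_mem_centF _, zero_mem_centF _⟩)] at hle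
        have hins : (insert vx (insert vy T')).card ≤ T'.card + 2 := by
          calc (insert vx (insert vy T')).card ≤ (insert vy T').card + 1 :=
                Finset.card_insert_le _ _
            _ ≤ T'.card + 1 + 1 := by
                have := Finset.card_insert_le vy T'
                omega
            _ = T'.card + 2 := by omega
        omega
      have hxny : x0 ∉ centF y0 := fun h => hxy0 (mem_centF.1 h).symm
      have htdvd : t ∣ (centF x0).card := centF_inter_card_dvd x0 y0
      have htne : t ≠ (centF x0).card := by
        intro h
        have heq : centF x0 ∩ centF y0 = centF x0 :=
          Finset.eq_of_subset_of_card_le Finset.inter_subset_left (le_of_eq h.symm)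
        have : x0 ∈ centF x0 ∩ centF y0 := by rw [heq]; exact self_mem_centF x0
        exact hxny (Finset.mem_inter.1 this).2
      have hcx0pos : 0 < (centF x0).card := Finset.card_pos.2 ⟨x0, self_mem_centF x0⟩
      have h2t : 2 * t ≤ (centF x0).card := two_mul_le_of_dvd htdvd htne hcx0pos
      have hnpos : 0 < n := by omega
      have hcx0dvd : (centF x0).card ∣ n := hcard ▸ centF_card_dvd x0
      have hcx0ne : (centF x0).card ≠ n := fun h => centF_card_ne x0 hx0 (h.trans hcard.symm)
      have h2c : 2 * (centF x0).card ≤ n := two_mul_le_of_dvd hcx0dvd hcx0ne hnpos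
      have hn10 : n ≤ 10 := by omega
      have hclass : ∀ v : V, (n = 6 ∧ (centF v.1).card = 3) ∨ (n = 8 ∧ (centF v.1).card = 4) ∨
          (n = 9 ∧ (centF v.1).card = 3) ∨ (n = 10 ∧ (centF v.1).card = 5) := by
        intro v
        have h1 := card_centF_vertex hz v
        have h2 : 1 ≤ (nbr v).card := Finset.card_pos.2 (hnei v)
        have hdvd : (centF v.1).card ∣ n := hcard ▸ centF_card_dvd v.1
        have hne : (centF v.1).card ≠ n := fun h => centF_card_ne v.1 v.2 (h.trans hcard.symm)
        exact divisor_class hdvd (by omega) (two_mul_le_of_dvd hdvd hne hnpos) hn10 hn3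
      have hnegV : ∀ v : V, (-(v.1)) ∉ Set.center R := fun v =>
        (not_center_iff hz _).2 (neg_ne_zero.2 (vertex_ne_zero hz v))
      rcases hclass vx with ⟨hn', -⟩ | ⟨hn', -⟩ | ⟨hn', -⟩ | ⟨hn', -⟩
      · -- n = 6
        have hall3 : ∀ v : V, (centF v.1).card = 3 := by
          intro v
          rcases hclass v with ⟨-, h⟩ | ⟨h, -⟩ | ⟨h, -⟩ | ⟨h, -⟩ <;> omega
        have hf : ∀ v : V, -(v.1) ≠ v.1 := by
          intro v
          obtain ⟨w, hw1, -, hwv, -, -⟩ := degOne hz v (hall3 v)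
          intro h
          exact hwv (Subtype.ext (hw1.trans h))
        have heven := Finset.even_card_invol (fun v : V => (⟨-(v.1), hnegV v⟩ : V))
          Finset.univ (fun x _ => ⟨Finset.mem_univ _, Subtype.ext (by simp),
            fun h => hf x (congrArg Subtype.val h)⟩)
        rw [Finset.card_univ, hm, hn'] at heven
        exact (by decide : ¬ Even 5) heven
      · -- n = 8
        have hall4 : ∀ v : V, (centF v.1).card = 4 := by
          intro v
          rcases hclass v with ⟨h, -⟩ | ⟨-, h⟩ | ⟨h, -⟩ | ⟨h, -⟩ <;> omega
        have hall : ∀ u : V, (nbr u).Nonempty → (centF u.1).card ≤ 4 :=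
          fun u _ => le_of_eq (hall4 u)
        have hfib : ∀ v : V,
            (Finset.univ.filter (fun u : V => centF u.1 = centF v.1)).card = 3 := by
          intro v
          obtain ⟨x, y, hNv, hxy, hcx, hcy, hadjxy, hadjvx, hadjvy⟩ :=
            degTwo hz v (hall4 v) hall
          have hset : Finset.univ.filter (fun u : V => centF u.1 = centF v.1)
              = {v, x, y} := by
            ext u
            simp only [Finset.mem_filter, Finset.mem_univ, true_and, Finset.mem_insert,
              Finset.mem_singleton]
            constructor
            · intro hcu
              have hu : u.1 ∈ centF v.1 := hcu ▸ self_mem_centF u.1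
              rw [centF_vertex hz v, hNv] at hu
              simp only [Finset.image_insert, Finset.image_singleton, Finset.mem_insert,
                Finset.mem_singleton] at hu
              rcases hu with h | h | h | h
              · exact absurd h (vertex_ne_zero hz u)
              · exact Or.inl (Subtype.ext h)
              · exact Or.inr (Or.inl (Subtype.ext h))
              · exact Or.inr (Or.inr (Subtype.ext h))
            · rintro (rfl | rfl | rfl)
              · rfl
              · exact hcx
              · exact hcy
          rw [hset]
          have hvx' : v ≠ x := hadjvx.ne
          have hvy' : v ≠ y := hadjvy.ne
          rw [Finset.card_insert_of_notMem (by simp [hvx', hvy']),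
            Finset.card_insert_of_notMem (by simpa using hxy), Finset.card_singleton]
        have hsumfib := Finset.card_eq_sum_card_fiberwise
          (f := fun u : V => centF u.1) (s := Finset.univ)
          (t := Finset.univ.image (fun u : V => centF u.1))
          (fun x hx => Finset.mem_image_of_mem _ hx)
        have hcongr : ∀ b ∈ Finset.univ.image (fun u : V => centF u.1),
            (Finset.univ.filter (fun u : V => centF u.1 = b)).card = 3 := by
          intro b hb
          obtain ⟨v, -, rfl⟩ := Finset.mem_image.1 hb
          exact hfib v
        rw [Finset.sum_congr rfl hcongr, Finset.sum_const, smul_eq_mul,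
          Finset.card_univ, hm, hn'] at hsumfib
        omega
      · -- n = 9
        have hall3 : ∀ v : V, (centF v.1).card = 3 := by
          intro v
          rcases hclass v with ⟨h, -⟩ | ⟨h, -⟩ | ⟨-, h⟩ | ⟨h, -⟩ <;> omega
        have hγ2le2 : (Γᶜ).dominationNumber ≤ 2 := by
          have hdom : (Γᶜ).IsDominatingSet {vx, vy} := by
            intro u hu
            simp only [Finset.mem_insert, Finset.mem_singleton, not_or] at hu
            obtain ⟨hux, huy⟩ := hu
            by_contra hcon
            push_neg at hcon
            have hx' := hcon vx (by simp)
            have hy' := hcon vy (by simp)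
            have hcomx : x0 * u.1 = u.1 * x0 := by
              by_contra hc
              exact hx' ((SimpleGraph.compl_adj _ _ _).2 ⟨fun h => hux h.symm, fun hadj => hc hadj.2⟩)
            have hcomy : y0 * u.1 = u.1 * y0 := by
              by_contra hc
              exact hy' ((SimpleGraph.compl_adj _ _ _).2 ⟨fun h => huy h.symm, fun hadj => hc hadj.2⟩)
            obtain ⟨wx, hwx1, hwxN, -, -, -⟩ := degOne hz vx (hall3 vx)
            obtain ⟨wy, hwy1, hwyN, -, -, -⟩ := degOne hz vy (hall3 vy)
            have hmemx : u.1 ∈ centF x0 := mem_centF.2 hcomx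
            have hmemy : u.1 ∈ centF y0 := mem_centF.2 hcomy
            rw [show x0 = (vx : R) from rfl, centF_vertex hz vx, hwxN] at hmemx
            rw [show y0 = (vy : R) from rfl, centF_vertex hz vy, hwyN] at hmemy
            simp only [Finset.image_singleton, Finset.mem_insert,
              Finset.mem_singleton] at hmemx hmemy
            have hux' : u.1 = (wx : R) := by
              rcases hmemx with h | h | h
              · exact absurd h (vertex_ne_zero hz u)
              · exact absurd (Subtype.ext h) hux
              · exact h
            have huy' : u.1 = (wy : R) := by
              rcases hmemy with h | h | h
              · exact absurd h (vertex_ne_zero hz u)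
              · exact absurd (Subtype.ext h) huy
              · exact h
            have : x0 = y0 := by
              have h1 : -(x0) = -(y0) := by
                rw [← hwx1, ← hwy1, ← hux', ← huy']
              exact neg_inj.1 h1
            exact hxy0 (by rw [this])
          have := (Γᶜ).dominationNumber_le hdom
          have hc2 : ({vx, vy} : Finset V).card ≤ 2 := Finset.card_insert_le _ _
          omega
        omega
      · -- n = 10
        have hall5 : ∀ v : V, (centF v.1).card = 5 := by
          intro v
          rcases hclass v with ⟨h, -⟩ | ⟨h, -⟩ | ⟨h, -⟩ | ⟨-, h⟩ <;> omega
        have hf : ∀ v : V, -(v.1) ≠ v.1 := by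
          intro v h
          have h5 : (5 : ℕ) • v.1 = 0 := by
            have := card_smul_centF v.1
            rwa [hall5 v] at this
          have h2 : v.1 + v.1 = 0 := by
            have := neg_add_cancel v.1
            rwa [h] at this
          have hv0 : v.1 = 0 := by
            have hcalc : v.1 = (5 : ℕ) • v.1 - ((v.1 + v.1) + (v.1 + v.1)) := by abel
            rw [h5, h2] at hcalc
            simpa using hcalc
          exact vertex_ne_zero hz v hv0
        have heven := Finset.even_card_invol (fun v : V => (⟨-(v.1), hnegV v⟩ : V))
          Finset.univ (fun x _ => ⟨Finset.mem_univ _, Subtype.ext (by simp),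
            fun h => hf x (congrArg Subtype.val h)⟩)
        rw [Finset.card_univ, hm, hn'] at heven
        exact (by decide : ¬ Even 9) heven

  · rintro ⟨heven, a, b, c, hab, hac, hbc, hadjab, hadjac, hadjbc, honly⟩
    have hNa : nbr a = {b, c} := by
      ext u
      rw [mem_nbr_adj]
      simp only [Finset.mem_insert, Finset.mem_singleton]
      constructor
      · intro hadj
        rcases honly u a hadj.symm with rfl | rfl | rfl
        · exact absurd rfl hadj.ne'
        · exact Or.inl rfl
        · exact Or.inr rfl
      · rintro (rfl | rfl)
        · exact hadjab
        · exact hadjac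
    have hca : (centF ((a : R))).card = 4 := by
      rw [card_centF_vertex hz a, hNa, Finset.card_insert_of_notMem (by simpa using hbc),
        Finset.card_singleton]
    have h4n : 4 ∣ n := by
      have := centF_card_dvd ((a : R))
      rwa [hca, hcard] at this
    have hn4 : n ≠ 4 := by
      intro h
      apply centF_card_ne ((a : R)) a.2
      rw [hca, hcard, h]
    have hn8 : 8 ≤ n := by
      obtain ⟨k, rfl⟩ := h4n
      match k with
      | 0 => omega
      | 1 => omega
      | (k+2) => omega
    -- isolated vertices
    have hisol : ∀ u : V, u ≠ a → u ≠ b → u ≠ c → nbr u = ∅ := by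
      intro u hua hub huc
      rw [Finset.eq_empty_iff_forall_notMem]
      intro w hw
      rcases honly u w (mem_nbr_adj.1 hw) with rfl | rfl | rfl
      · exact hua rfl
      · exact hub rfl
      · exact huc rfl
    -- γ2 = 1
    have habc_card : ({a, b, c} : Finset V).card = 3 := by
      rw [Finset.card_insert_of_notMem (by simp [hab, hac]),
        Finset.card_insert_of_notMem (by simpa using hbc), Finset.card_singleton]
    have hv0 : ∃ v0 : V, v0 ∉ ({a, b, c} : Finset V) := by
      by_contra h
      push_neg at h
      have : (Finset.univ : Finset V) ⊆ {a, b, c} := fun v _ => h v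
      have := Finset.card_le_card this
      rw [Finset.card_univ, habc_card] at this
      omega
    obtain ⟨v0, hv0⟩ := hv0
    simp only [Finset.mem_insert, Finset.mem_singleton, not_or] at hv0
    obtain ⟨hv0a, hv0b, hv0c⟩ := hv0
    have hγ2 : (Γᶜ).dominationNumber = 1 := by
      refine le_antisymm ?_ hγ2pos
      have hdom : (Γᶜ).IsDominatingSet {v0} := by
        intro u hu
        have huv0 : u ≠ v0 := by simpa using hu
        refine ⟨v0, Finset.mem_singleton_self v0, ?_⟩
        rw [SimpleGraph.compl_adj]
        refine ⟨huv0.symm, fun hadj => ?_⟩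
        have := hisol v0 hv0a hv0b hv0c
        rw [Finset.eq_empty_iff_forall_notMem] at this
        exact this u (mem_nbr_adj.2 hadj)
      simpa using (Γᶜ).dominationNumber_le hdom
    -- γ1 = n - 3
    have hγ1le : Γ.dominationNumber ≤ n - 3 := by
      have hX : ∀ x ∈ ({b, c} : Finset V), ∃ u, u ∉ ({b, c} : Finset V) ∧ Γ.Adj u x := by
        intro x hx
        refine ⟨a, by simp [hab, hac], ?_⟩
        simp only [Finset.mem_insert, Finset.mem_singleton] at hx
        rcases hx with rfl | rfl
        · exact hadjab
        · exact hadjac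
      have := Γ.dominationNumber_le_sub {b, c} hX
      rw [Finset.card_insert_of_notMem (by simpa using hbc), Finset.card_singleton, hm] at this
      omega
    have hγ1ge : n - 3 ≤ Γ.dominationNumber := by
      obtain ⟨D, hD, hDcard⟩ := Γ.exists_min_dominating
      have hUD : Finset.univ \ ({a, b, c} : Finset V) ⊆ D := by
        intro u hu
        simp only [Finset.mem_sdiff, Finset.mem_univ, true_and, Finset.mem_insert,
          Finset.mem_singleton, not_or] at hu
        refine Γ.isolated_mem_dominating hD (fun w hadj => ?_)
        have := hisol u hu.1 hu.2.1 hu.2.2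
        rw [Finset.eq_empty_iff_forall_notMem] at this
        exact this w (mem_nbr_adj.2 hadj)
      have hu0 : ∃ u0 ∈ D, u0 ∈ ({a, b, c} : Finset V) := by
        by_cases haD : a ∈ D
        · exact ⟨a, haD, by simp⟩
        · obtain ⟨u, huD, hadj⟩ := hD a haD
          refine ⟨u, huD, ?_⟩
          rcases honly u a hadj with rfl | rfl | rfl <;> simp
      obtain ⟨u0, hu0D, hu0abc⟩ := hu0
      have hins : insert u0 (Finset.univ \ ({a, b, c} : Finset V)) ⊆ D := by
        intro w hw
        rcases Finset.mem_insert.1 hw with rfl | hw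
        · exact hu0D
        · exact hUD hw
      have hcards : (insert u0 (Finset.univ \ ({a, b, c} : Finset V))).card =
          Fintype.card V - 3 + 1 := by
        rw [Finset.card_insert_of_notMem (by simp [hu0abc]),
          Finset.card_sdiff_of_subset (Finset.subset_univ _), Finset.card_univ, habc_card]
      have := Finset.card_le_card hins
      rw [hcards, hDcard, hm] at this
      omega
    omega

end
end

section
/- Let R₁, …, R_t be finite non-commutative rings with |R_i| = n_i and Z(R_i) = {0}, and let δ_i be the minimum degree of the commuting graph Γ(R_i). If δ_i is odd for all 1 ≤ i ≤ t, then γ_s(Γ(R₁ × ⋯ × R_t)) ≤ (∏ᵢ n_i) - ∏ᵢ(δ_i + 2) + 2; otherwise (i.e. if some δ_i is even), γ_s(Γ(R₁ × ⋯ × R_t)) ≤ (∏ᵢ n_i) - ∏ᵢ(δ_i + 2) + 1. -/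
open scoped Classical

noncomputable section

/-- The centralizer of a noncentral element has `degree + 2` elements, when the
center is `{0}`. -/
lemma aux_centralizer_card {A : Type*} [NonUnitalRing A] [Fintype A]
    (hz : Set.center A = {0}) (w : {x : A // x ∉ Set.center A})
    [Fintype ((commutingGraph A).neighborSet w)]
    [DecidablePred (fun x : A => x * (w : A) = (w : A) * x)] :
    (Finset.univ.filter (fun x : A => x * w = w * x)).card
      = (commutingGraph A).degree w + 2 := by
  classical
  have hz' : ∀ x : A, x ∈ Set.center A ↔ x = 0 := by
    intro x; rw [hz]; exact Set.mem_singleton_iff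
  have hw0 : (w : A) ≠ 0 := fun h => w.2 ((hz' _).mpr h)
  have key : Finset.univ.filter (fun x : A => x * w = w * x)
      = insert 0 (insert (w : A)
          (((commutingGraph A).neighborFinset w).image Subtype.val)) := by
    ext x
    simp only [Finset.mem_filter, Finset.mem_univ, true_and, Finset.mem_insert,
      Finset.mem_image, SimpleGraph.mem_neighborFinset]
    constructor
    · intro hx
      by_cases h0 : x = 0
      · exact Or.inl h0
      by_cases hxw : x = (w : A)
      · exact Or.inr (Or.inl hxw)
      · refine Or.inr (Or.inr ⟨⟨x, ?_⟩, ⟨?_, hx.symm⟩, rfl⟩)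
        · exact fun hc => h0 ((hz' _).mp hc)
        · intro h; exact hxw (congrArg Subtype.val h).symm
    · rintro (rfl | rfl | ⟨u, ⟨hne, hcomm⟩, rfl⟩)
      · simp
      · rfl
      · exact hcomm.symm
  have h1 : (w : A) ∉ ((commutingGraph A).neighborFinset w).image Subtype.val := by
    simp only [Finset.mem_image, SimpleGraph.mem_neighborFinset]
    rintro ⟨u, ⟨hne, -⟩, hu⟩
    exact hne (Subtype.ext hu.symm)
  have h0 : (0 : A) ∉
      insert (w : A) (((commutingGraph A).neighborFinset w).image Subtype.val) := by
    simp only [Finset.mem_insert, Finset.mem_image, SimpleGraph.mem_neighborFinset]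
    rintro (h | ⟨u, -, hu⟩)
    · exact hw0 h.symm
    · exact u.2 ((hz' _).mpr hu)
  rw [key, Finset.card_insert_of_notMem h0, Finset.card_insert_of_notMem h1,
    Finset.card_image_of_injective _ Subtype.val_injective]
  rfl

/-- The centralizer of any element has at least `δ + 2` elements, where `δ` is
the minimum degree of the commuting graph. -/
lemma aux_centralizer_lb {A : Type*} [NonUnitalRing A] [Fintype A]
    (hz : Set.center A = {0}) (d : ℕ)
    (hd : IsLeast {e : ℕ | ∃ v, (commutingGraph A).degree v = e} d) (y : A)
    [DecidablePred (fun x : A => x * y = y * x)] :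
    d + 2 ≤ (Finset.univ.filter (fun x : A => x * y = y * x)).card := by
  classical
  obtain ⟨v, hv⟩ := hd.1
  by_cases hy : y ∈ Set.center A
  · have hy0 : y = 0 := by rw [hz] at hy; simpa using hy
    subst hy0
    have : Finset.univ.filter (fun x : A => x * 0 = 0 * x) = Finset.univ := by
      simp
    rw [this]
    calc d + 2 = (Finset.univ.filter (fun x : A => x * v = v * x)).card := by
          rw [aux_centralizer_card hz v, hv]
      _ ≤ Finset.univ.card := Finset.card_le_card (Finset.filter_subset _ _)
  · have := aux_centralizer_card hz ⟨y, hy⟩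
    rw [this]
    have : d ≤ (commutingGraph A).degree ⟨y, hy⟩ := hd.2 ⟨⟨y, hy⟩, rfl⟩
    omega

/-- Generic upper bound for the signed domination number: if `2k` is at most the
minimum degree, we can put `-1` on any `k` vertices. -/
lemma aux_signed_upper {V : Type*} [Fintype V] (G : SimpleGraph V) (k : ℕ)
    (hk : k ≤ Fintype.card V) (hdeg : ∀ v, 2 * k ≤ G.degree v) :
    G.signedDominationNumber ≤ (Fintype.card V : ℤ) - 2 * k := by
  classical
  obtain ⟨T, -, hT⟩ := Finset.exists_subset_card_eq (s := (Finset.univ : Finset V)) (n := k)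
    (by simpa using hk)
  set f : V → ℤ := fun v => if v ∈ T then -1 else 1 with hf
  have hsum : ∀ s : Finset V, ∑ v ∈ s, f v = (s.card : ℤ) - 2 * ((s ∩ T).card : ℤ) := by
    intro s
    have h1 : (s \ T).card + (s ∩ T).card = s.card := Finset.card_sdiff_add_card_inter s T
    have h2 : Finset.filter (fun x => x ∉ T) s = s \ T := by
      ext u; simp [Finset.mem_sdiff, and_comm]
    have h3 : Finset.filter (fun x => x ∈ T) s = s ∩ T := by
      ext u; simp [Finset.mem_inter]
    rw [hf, Finset.sum_ite, Finset.sum_const, Finset.sum_const, h2, h3]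
    simp only [nsmul_eq_mul]
    push_cast
    omega
  have hmem : ((Fintype.card V : ℤ) - 2 * k) ∈
      {w : ℤ | ∃ f : V → ℤ, (∀ v, f v = 1 ∨ f v = -1) ∧
        (∀ v : V, 1 ≤ ∑ u ∈ Finset.univ.filter (fun u => G.Adj v u ∨ u = v), f u) ∧
        w = ∑ v, f v} := by
    refine ⟨f, fun v => by by_cases h : v ∈ T <;> simp [hf, h], fun v => ?_, ?_⟩
    · set N := Finset.univ.filter (fun u => G.Adj v u ∨ u = v) with hN
      have hNcard : N.card = G.degree v + 1 := by
        have : N = insert v (G.neighborFinset v) := by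
          ext u
          simp only [hN, Finset.mem_filter, Finset.mem_univ, true_and,
            Finset.mem_insert, SimpleGraph.mem_neighborFinset]
          tauto
        rw [this, Finset.card_insert_of_notMem (by simp)]
        rfl
      have hint : (N ∩ T).card ≤ k := by
        rw [← hT]; exact Finset.card_le_card (Finset.inter_subset_right)
      rw [hsum N, hNcard]
      have := hdeg v
      push_cast
      omega
    · rw [hsum Finset.univ]
      simp [Finset.univ_inter, hT, Finset.card_univ]
  have hbdd : BddBelow {w : ℤ | ∃ f : V → ℤ, (∀ v, f v = 1 ∨ f v = -1) ∧
        (∀ v : V, 1 ≤ ∑ u ∈ Finset.univ.filter (fun u => G.Adj v u ∨ u = v), f u) ∧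
        w = ∑ v, f v} := by
    refine ⟨-(Fintype.card V : ℤ), ?_⟩
    rintro w ⟨g, hg, -, rfl⟩
    have : ∀ v ∈ (Finset.univ : Finset V), (-1 : ℤ) ≤ g v := by
      intro v _; rcases hg v with h | h <;> omega
    calc -(Fintype.card V : ℤ) = ∑ _v : V, (-1 : ℤ) := by
          simp [Finset.card_univ]
      _ ≤ ∑ v, g v := Finset.sum_le_sum this
  exact csInf_le hbdd hmem

/-- Theorem E: an upper bound for the signed domination number of the commuting graph of a
direct product, where `δ i` is the minimum degree of `Γ(Rᵢ)`. -/
theorem stmt_7 (t : ℕ) (ht : 0 < t)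
    (R : Fin t → Type*) [∀ i, NonUnitalRing (R i)] [∀ i, Fintype (R i)]
    (n δ : Fin t → ℕ)
    (hn : ∀ i, Fintype.card (R i) = n i)
    (hnc : ∀ i, ∃ x y : R i, x * y ≠ y * x)
    (hz : ∀ i, Set.center (R i) = {0})
    (hδ : ∀ i, IsLeast {d : ℕ | ∃ v, (commutingGraph (R i)).degree v = d} (δ i)) :
    ((∀ i, Odd (δ i)) →
      (commutingGraph (∀ i, R i)).signedDominationNumber ≤
        (∏ i, (n i : ℤ)) - (∏ i, ((δ i : ℤ) + 2)) + 2) ∧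
    ((∃ i, Even (δ i)) →
      (commutingGraph (∀ i, R i)).signedDominationNumber ≤
        (∏ i, (n i : ℤ)) - (∏ i, ((δ i : ℤ) + 2)) + 1) := by
  classical
  -- the center of the product ring is `{0}`
  have hzP : Set.center (∀ i, R i) = {0} := by
    ext x
    simp only [Set.mem_singleton_iff]
    rw [Semigroup.mem_center_iff]
    constructor
    · intro h
      funext i
      have hxi : x i ∈ Set.center (R i) := Semigroup.mem_center_iff.mpr (fun g => by
        have := congrFun (h (Function.update (0 : ∀ j, R j) i g)) i
        simpa using this)
      rw [hz i] at hxi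
      simpa using hxi
    · rintro rfl g
      funext i
      simp
  -- the centralizer of an element of the product is the product of centralizers
  have hprod : ∀ u : ∀ i, R i,
      (Finset.univ.filter (fun x : ∀ i, R i => x * u = u * x)).card
        = ∏ i, (Finset.univ.filter (fun y : R i => y * u i = u i * y)).card := by
    intro u
    have e : {x : ∀ i, R i // x * u = u * x} ≃ ∀ i, {y : R i // y * u i = u i * y} :=
      (Equiv.subtypeEquivRight (fun x => by
        constructor
        · intro h i; exact congrFun h i
        · intro h; funext i; exact h i)).trans (Equiv.subtypePiEquivPi)
    rw [← Fintype.card_subtype, Fintype.card_congr e, Fintype.card_pi]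
    exact Finset.prod_congr rfl (fun i _ => Fintype.card_subtype _)
  -- lower bound for degrees in the product graph
  have hdegP : ∀ u : {x : ∀ i, R i // x ∉ Set.center (∀ i, R i)},
      (∏ i, (δ i + 2)) ≤ (commutingGraph (∀ i, R i)).degree u + 2 := by
    intro u
    have h := aux_centralizer_card hzP u
    have h2 := hprod u.1
    have h3 : (∏ i, (δ i + 2))
        ≤ ∏ i, (Finset.univ.filter (fun y : R i => y * u.1 i = u.1 i * y)).card :=
      Finset.prod_le_prod' (fun i _ => aux_centralizer_lb (hz i) (δ i) (hδ i) (u.1 i))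
    omega
  set m := ∏ i, (δ i + 2) with hm
  -- each `δ i + 2 ≤ n i`
  have hmn : m ≤ ∏ i, n i := by
    rw [hm]
    refine Finset.prod_le_prod' (fun i _ => ?_)
    have h1 := aux_centralizer_lb (hz i) (δ i) (hδ i) (0 : R i)
    have h2 : (Finset.univ.filter (fun x : R i => x * 0 = 0 * x)).card
        ≤ Fintype.card (R i) := by
      rw [← Finset.card_univ]
      exact Finset.card_le_card (Finset.filter_subset _ _)
    rw [hn i] at h2
    omega
  -- cardinality of the vertex set of the product graph
  have hcV : Fintype.card {x : ∀ i, R i // x ∉ Set.center (∀ i, R i)} + 1 = ∏ i, n i := by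
    have h1 : Fintype.card {x : ∀ i, R i // x ∉ Set.center (∀ i, R i)}
        = Fintype.card {x : ∀ i, R i // x ≠ 0} :=
      Fintype.card_congr (Equiv.subtypeEquivRight (fun x => by rw [hzP]; simp))
    have h2 : Fintype.card {x : ∀ i, R i // x ≠ 0}
        = Fintype.card (∀ i, R i) - 1 := Set.card_ne_eq 0
    have h3 : Fintype.card (∀ i, R i) = ∏ i, n i := by
      rw [Fintype.card_pi]
      exact Finset.prod_congr rfl (fun i _ => hn i)
    have h4 : 0 < Fintype.card (∀ i, R i) := Fintype.card_pos
    omega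
  -- the key construction
  have key : ∀ k : ℕ, 2 * k + 2 ≤ m →
      (commutingGraph (∀ i, R i)).signedDominationNumber
        ≤ ((∏ i, n i : ℕ) : ℤ) - 1 - 2 * k := by
    intro k hk
    have h1 := aux_signed_upper (commutingGraph (∀ i, R i)) k (by omega)
      (fun v => by have := hdegP v; omega)
    refine le_trans h1 ?_
    have : (Fintype.card {x : ∀ i, R i // x ∉ Set.center (∀ i, R i)} : ℤ)
        = ((∏ i, n i : ℕ) : ℤ) - 1 := by omega
    rw [this]
  have e1 : (∏ i, (n i : ℤ)) = ((∏ i, n i : ℕ) : ℤ) := by push_cast; rfl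
  have e2 : (∏ i, ((δ i : ℤ) + 2)) = ((m : ℕ) : ℤ) := by rw [hm]; push_cast; rfl
  constructor
  · -- all δᵢ odd
    intro hodd
    have hmodd : Odd m := by
      rw [hm]
      refine Finset.prod_induction _ Odd (fun a b ha hb => ha.mul hb) odd_one
        (fun i _ => (hodd i).add_even even_two)
    have hm3 : 3 ≤ m := by
      have h5 : δ ⟨0, ht⟩ + 2 ≤ m := by
        rw [hm]
        exact Finset.single_le_prod' (fun i _ => by show 1 ≤ δ i + 2; omega) (Finset.mem_univ _)
      have h6 : 1 ≤ δ ⟨0, ht⟩ := (hodd _).pos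
      omega
    obtain ⟨r, hr⟩ := hmodd
    obtain ⟨k, hk⟩ : ∃ k, m = 2 * k + 3 := ⟨r - 1, by omega⟩
    refine le_trans (key k (by omega)) ?_
    rw [e1, e2]
    omega
  · -- some δᵢ even
    intro heven
    obtain ⟨i, hi⟩ := heven
    have hdvd : 2 ∣ m := by
      obtain ⟨c, hc⟩ := hi
      exact dvd_trans ⟨c + 1, by show δ i + 2 = 2 * (c + 1); omega⟩
        (Finset.dvd_prod_of_mem (fun i => δ i + 2) (Finset.mem_univ i))
    have hmpos : 0 < m := by
      rw [hm]
      exact Finset.prod_pos (fun i _ => by omega)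
    obtain ⟨r, hr⟩ := hdvd
    obtain ⟨k, hk⟩ : ∃ k, m = 2 * k + 2 := ⟨r - 1, by omega⟩
    refine le_trans (key k (by omega)) ?_
    rw [e1, e2]
    omega

end
end

section
/- Let R₁ be a finite non-commutative ring with Z(R₁) = {0}, and let R₂ be a finite commutative ring. Then γ(Γ(R₁ × R₂)) = γ(Γ(R₁)). -/
open scoped Classical

noncomputable section

/-- If `R₁` is non-commutative with trivial center and `R₂` is commutative, then
`γ(Γ(R₁ × R₂)) = γ(Γ(R₁))`. -/
theorem stmt_15 (R₁ R₂ : Type*) [NonUnitalRing R₁] [Fintype R₁]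
    [NonUnitalRing R₂] [Fintype R₂]
    (hnc : ∃ x y : R₁, x * y ≠ y * x)
    (hz : Set.center R₁ = {0})
    (hcomm : ∀ a b : R₂, a * b = b * a) :
    (commutingGraph (R₁ × R₂)).dominationNumber = (commutingGraph R₁).dominationNumber := by
  classical
  have hc : ∀ p : R₁ × R₂, p ∈ Set.center (R₁ × R₂) ↔ p.1 ∈ Set.center R₁ := by
    intro p
    rw [Semigroup.mem_center_iff, Semigroup.mem_center_iff]
    constructor
    · intro h g
      have := h (g, 0)
      exact congrArg Prod.fst this
    · intro h g
      have h1 : g.1 * p.1 = p.1 * g.1 := h g.1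
      have h2 : g.2 * p.2 = p.2 * g.2 := hcomm _ _
      exact Prod.ext h1 h2
  have hne1 : {n | ∃ D : Finset {x : R₁ // x ∉ Set.center R₁},
      (commutingGraph R₁).IsDominatingSet D ∧ D.card = n}.Nonempty :=
    ⟨_, Finset.univ, fun v hv => absurd (Finset.mem_univ v) hv, rfl⟩
  have hne2 : {n | ∃ D : Finset {x : R₁ × R₂ // x ∉ Set.center (R₁ × R₂)},
      (commutingGraph (R₁ × R₂)).IsDominatingSet D ∧ D.card = n}.Nonempty :=
    ⟨_, Finset.univ, fun v hv => absurd (Finset.mem_univ v) hv, rfl⟩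
  apply le_antisymm
  · obtain ⟨D, hD, hcard⟩ := Nat.sInf_mem hne1
    set lift : {x : R₁ // x ∉ Set.center R₁} → {x : R₁ × R₂ // x ∉ Set.center (R₁ × R₂)} :=
      fun d => ⟨(d.1, 0), fun h => d.2 ((hc _).mp h)⟩ with hlift
    set D' := D.image lift with hD'
    have hdom : (commutingGraph (R₁ × R₂)).IsDominatingSet D' := by
      rintro ⟨⟨a, b⟩, hab⟩ hv
      have ha : a ∉ Set.center R₁ := fun h => hab ((hc _).mpr h)
      by_cases hmem : (⟨a, ha⟩ : {x : R₁ // x ∉ Set.center R₁}) ∈ D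
      · refine ⟨lift ⟨a, ha⟩, Finset.mem_image_of_mem _ hmem, ?_, ?_⟩
        · intro h
          apply hv
          rw [← h]
          exact Finset.mem_image_of_mem _ hmem
        · show (a, (0 : R₂)) * (a, b) = (a, b) * (a, (0 : R₂))
          exact Prod.ext rfl (by simp)
      · obtain ⟨u, hu, hune, humul⟩ := hD _ hmem
        refine ⟨lift u, Finset.mem_image_of_mem _ hu, ?_, ?_⟩
        · intro h
          apply hune
          apply Subtype.ext
          have : (u.1, (0 : R₂)) = (a, b) := congrArg Subtype.val h
          exact congrArg Prod.fst this
        · show ((u : R₁), (0 : R₂)) * (a, b) = (a, b) * ((u : R₁), (0 : R₂))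
          exact Prod.ext humul (by simp)
    calc (commutingGraph (R₁ × R₂)).dominationNumber ≤ D'.card :=
          Nat.sInf_le ⟨D', hdom, rfl⟩
      _ ≤ D.card := Finset.card_image_le
      _ = (commutingGraph R₁).dominationNumber := hcard
  · obtain ⟨D', hD', hcard⟩ := Nat.sInf_mem hne2
    set proj : {x : R₁ × R₂ // x ∉ Set.center (R₁ × R₂)} → {x : R₁ // x ∉ Set.center R₁} :=
      fun d => ⟨d.1.1, fun h => d.2 ((hc _).mpr h)⟩ with hproj
    set D := D'.image proj with hD
    have hdom : (commutingGraph R₁).IsDominatingSet D := by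
      rintro ⟨a, ha⟩ hv
      have hpnc : ((a, (0 : R₂)) : R₁ × R₂) ∉ Set.center (R₁ × R₂) :=
        fun h => ha ((hc _).mp h)
      have hpmem : (⟨(a, 0), hpnc⟩ : {x : R₁ × R₂ // x ∉ Set.center (R₁ × R₂)}) ∉ D' := by
        intro h
        apply hv
        have : proj ⟨(a, 0), hpnc⟩ = ⟨a, ha⟩ := Subtype.ext rfl
        rw [← this]
        exact Finset.mem_image_of_mem _ h
      obtain ⟨u, hu, hune, humul⟩ := hD' _ hpmem
      refine ⟨proj u, Finset.mem_image_of_mem _ hu, ?_, ?_⟩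
      · intro h
        apply hv
        rw [← h]
        exact Finset.mem_image_of_mem _ hu
      · exact congrArg Prod.fst humul
    calc (commutingGraph R₁).dominationNumber ≤ D.card := Nat.sInf_le ⟨D, hdom, rfl⟩
      _ ≤ D'.card := Finset.card_image_le
      _ = (commutingGraph (R₁ × R₂)).dominationNumber := hcard

end
end
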